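/- arXiv:1006.3329 — 6 statements merged into one kernel-verified Lean document; each statement's English description precedes it below -/
import Mathlib

section
/- Let N be a positive integer, ω = 1/(4N), and S = ℤ \ { −N k² : k ∈ D } (so that λ_k + ωn ≠ 0 for all k ∈ D whenever n ∈ S). Then for every n ∈ S the series m_n = Σ_{k∈D} 1/(λ_k + ωn) converges absolutely, and sup_{n∈S} |m_n| < ∞; consequently there is a constant C such that Σ_{n∈S} | m_n q_n |² ≤ C Σ_{n∈S} |q_n|² for every square-summable family (q_n)_{n∈S} of complex numbers. -/
open MeasureTheory Set Filter
open scoped Real Topology ENNReal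

noncomputable section

/-- `lam k = k²/4`, the eigenvalues of the Dirichlet Laplacian on `[-π,π]`. -/
def lam (k : ℕ) : ℝ := (k : ℝ) ^ 2 / 4

/-- Partial sums (over odd `k < K`) of the series defining `U q`. -/
def partialU (q : ℝ → ℂ) (K : ℕ) (t : ℝ) : ℂ :=
  ∑ k ∈ (Finset.range K).filter (fun k => Odd k),
    ∫ s in (0:ℝ)..t, q s * Complex.exp (-Complex.I * (lam k : ℂ) * ((t : ℂ) - (s : ℂ)))

/-- `Uq` is the limit in `L²((0,T),ℂ)` of the partial sums `partialU q K`. -/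
def IsULim (T : ℝ) (q Uq : ℝ → ℂ) : Prop :=
  Tendsto (fun K => eLpNorm (fun t => partialU q K t - Uq t) 2
    (volume.restrict (Ioc 0 T))) atTop (nhds 0)

/-- `q` is an `H¹(0,T)` function with derivative `g`. -/
def IsH1 (T : ℝ) (q g : ℝ → ℂ) : Prop :=
  MemLp g 2 (volume.restrict (Ioc 0 T)) ∧
  ∀ t ∈ Icc (0:ℝ) T, q t = q 0 + ∫ s in (0:ℝ)..t, g s

/-- The `L²(0,T)` norm of a function. -/
def L2norm (T : ℝ) (q : ℝ → ℂ) : ℝ := (eLpNorm q 2 (volume.restrict (Ioc 0 T))).toReal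

/-- The `H¹(0,T)` norm of an `H¹` function `q` with derivative `g`. -/
def H1norm (T : ℝ) (q g : ℝ → ℂ) : ℝ := Real.sqrt ((L2norm T q) ^ 2 + (L2norm T g) ^ 2)

section Aux

lemma sum_g_le (K : ℕ) : ∑ i ∈ Finset.range K, (1:ℝ)/((i:ℝ)+1)^2 ≤ 2 - 2/((K:ℝ)+1) := by
  induction K with
  | zero => simp
  | succ K ih =>
    rw [Finset.sum_range_succ]
    have h1 : (0:ℝ) < (K:ℝ)+1 := by positivity
    have h2 : (0:ℝ) < (K:ℝ)+2 := by positivity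
    have key : (1:ℝ)/((K:ℝ)+1)^2 ≤ 2/((K:ℝ)+1) - 2/((K:ℝ)+2) := by
      rw [div_sub_div _ _ (ne_of_gt h1) (ne_of_gt h2), div_le_div_iff₀ (by positivity) (by positivity)]
      nlinarith [sq_nonneg ((K:ℝ)+1)]
    push_cast
    have h3 : ((K:ℝ)+1+1) = (K:ℝ)+2 := by ring
    rw [h3]
    linarith

lemma sum_g_le' (K : ℕ) : ∑ i ∈ Finset.range K, (1:ℝ)/((i:ℝ)+1)^2 ≤ 2 := by
  have := sum_g_le K
  have h2 : (0:ℝ) ≤ 2/((K:ℝ)+1) := by positivity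
  linarith

lemma g_summable : Summable (fun i : ℕ => (1:ℝ)/((i:ℝ)+1)^2) :=
  summable_of_sum_range_le (fun n => by positivity) sum_g_le'

lemma g_tsum_le : ∑' i : ℕ, (1:ℝ)/((i:ℝ)+1)^2 ≤ 2 :=
  Real.tsum_le_of_sum_range_le (fun n => by positivity) sum_g_le'

lemma dist_add_self (i j₀ : ℕ) : Nat.dist (i + j₀) j₀ = i := by
  simp [Nat.dist]

lemma maj_summable (c : ℝ) (j₀ : ℕ) :
    Summable (fun j : ℕ => c/((Nat.dist j j₀ : ℝ)+1)^2) := by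
  rw [← summable_nat_add_iff j₀]
  simp only [dist_add_self]
  have := g_summable.mul_left c
  exact this.congr fun i => mul_one_div c _

lemma maj_tsum_le (c : ℝ) (hc : 0 ≤ c) (j₀ : ℕ) :
    ∑' j : ℕ, c/((Nat.dist j j₀ : ℝ)+1)^2 ≤ 4*c := by
  have hsum := maj_summable c j₀
  rw [← hsum.sum_add_tsum_nat_add j₀]
  have htail : ∑' i : ℕ, c/((Nat.dist (i + j₀) j₀ : ℝ)+1)^2 ≤ 2*c := by
    simp only [dist_add_self]
    calc ∑' i : ℕ, c/((i:ℝ)+1)^2 = c * ∑' i : ℕ, (1:ℝ)/((i:ℝ)+1)^2 := by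
          rw [← tsum_mul_left]
          exact tsum_congr fun i => (mul_one_div c _).symm
      _ ≤ c * 2 := mul_le_mul_of_nonneg_left g_tsum_le hc
      _ = 2*c := by ring
  have hfin : ∑ i ∈ Finset.range j₀, c/((Nat.dist i j₀ : ℝ)+1)^2 ≤ 2*c := by
    rw [← Finset.sum_range_reflect]
    have hterm : ∀ i ∈ Finset.range j₀,
        c/((Nat.dist (j₀ - 1 - i) j₀ : ℝ)+1)^2 ≤ c * ((1:ℝ)/((i:ℝ)+1)^2) := by
      intro i hi
      rw [Finset.mem_range] at hi
      have hd : Nat.dist (j₀ - 1 - i) j₀ = i + 1 := by simp [Nat.dist]; omega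
      rw [hd, mul_one_div]
      push_cast
      gcongr <;> linarith [Nat.cast_nonneg (α := ℝ) i]
    calc ∑ i ∈ Finset.range j₀, c/((Nat.dist (j₀ - 1 - i) j₀ : ℝ)+1)^2
        ≤ ∑ i ∈ Finset.range j₀, c * ((1:ℝ)/((i:ℝ)+1)^2) := Finset.sum_le_sum hterm
      _ = c * ∑ i ∈ Finset.range j₀, (1:ℝ)/((i:ℝ)+1)^2 := by rw [Finset.mul_sum]
      _ ≤ c * 2 := mul_le_mul_of_nonneg_left (sum_g_le' j₀) hc
      _ = 2*c := by ring
  linarith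


lemma quad_ineq {d : ℤ} (hd : 2 ≤ d) : (d+1)^2 ≤ 4*(4*(d-1)*d+1) := by nlinarith

lemma exists_j0 (N : ℕ) (hN : 0 < N) (n : ℤ)
    (hn : ∀ j : ℕ, (N:ℤ)*(2*(j:ℤ)+1)^2 + n ≠ 0) :
    ∃ j₀ : ℕ, ∀ j : ℕ, ((Nat.dist j j₀ : ℤ) + 1)^2 ≤ 4 * |(N:ℤ)*(2*(j:ℤ)+1)^2 + n| := by
  have hN1 : (1:ℤ) ≤ N := by exact_mod_cast hN
  rcases le_or_gt 0 n with hpos | hneg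
  · refine ⟨0, fun j => ?_⟩
    have hj0 : (0:ℤ) ≤ (j:ℤ) := Int.natCast_nonneg j
    have hb : (0:ℤ) < (N:ℤ)*(2*(j:ℤ)+1)^2 + n := by nlinarith
    rw [abs_of_pos hb]
    have hd : (Nat.dist j 0 : ℤ) = (j:ℤ) := by rw [Nat.dist_zero_right]
    rw [hd]
    nlinarith [mul_le_mul_of_nonneg_right hN1 (sq_nonneg (2*(j:ℤ)+1))]
  · have hex : ∃ j : ℕ, -n ≤ (N:ℤ)*(2*(j:ℤ)+1)^2 := by
      refine ⟨(-n).toNat, ?_⟩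
      have h1 : -n ≤ (((-n).toNat : ℕ) : ℤ) := Int.self_le_toNat _
      have h2 : (0:ℤ) ≤ (((-n).toNat : ℕ) : ℤ) := Int.natCast_nonneg _
      nlinarith
    classical
    set j₀ := Nat.find hex with hj₀def
    have h1 : -n ≤ (N:ℤ)*(2*(j₀:ℤ)+1)^2 := Nat.find_spec hex
    have h2 : ∀ j : ℕ, j < j₀ → (N:ℤ)*(2*(j:ℤ)+1)^2 < -n :=
      fun j hj => lt_of_not_ge (Nat.find_min hex hj)
    refine ⟨j₀, fun j => ?_⟩
    have hne := hn j
    have hj0 : (0:ℤ) ≤ (j:ℤ) := Int.natCast_nonneg j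
    have hj00 : (0:ℤ) ≤ (j₀:ℤ) := Int.natCast_nonneg j₀
    rcases le_or_gt j₀ j with hj | hj
    · have hd : (Nat.dist j j₀ : ℤ) = (j:ℤ) - (j₀:ℤ) := by
        rw [Nat.dist_eq_sub_of_le_right hj]; push_cast [hj]; ring
      have hcj : (j₀:ℤ) ≤ (j:ℤ) := by exact_mod_cast hj
      have hmono : (N:ℤ)*(2*(j₀:ℤ)+1)^2 ≤ (N:ℤ)*(2*(j:ℤ)+1)^2 := by
        have hsq : (2*(j₀:ℤ)+1)^2 ≤ (2*(j:ℤ)+1)^2 := by nlinarith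
        exact mul_le_mul_of_nonneg_left hsq (by linarith)
      have hb0 : (0:ℤ) ≤ (N:ℤ)*(2*(j:ℤ)+1)^2 + n := by linarith
      have hb1 : (1:ℤ) ≤ (N:ℤ)*(2*(j:ℤ)+1)^2 + n := by
        rcases hb0.lt_or_eq with h | h
        · linarith
        · exact absurd h.symm hne
      rw [abs_of_pos (by linarith), hd]
      have hb2 : 4*((j:ℤ)-j₀)*((j:ℤ)-j₀+1) ≤ (N:ℤ)*(2*(j:ℤ)+1)^2 + n := by
        nlinarith [mul_le_mul_of_nonneg_left
          (show ((j:ℤ)-j₀)*((j:ℤ)-j₀+1) ≤ ((j:ℤ)-j₀)*((j:ℤ)+j₀+1) from by nlinarith) (by linarith : (0:ℤ) ≤ (N:ℤ))]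
      nlinarith [sq_nonneg ((j:ℤ)-j₀)]
    · have hd : (Nat.dist j j₀ : ℤ) = (j₀:ℤ) - (j:ℤ) := by
        rw [Nat.dist_eq_sub_of_le hj.le]; push_cast [hj.le]; ring
      have hcj : (j:ℤ) < (j₀:ℤ) := by exact_mod_cast hj
      have hbneg : (N:ℤ)*(2*(j:ℤ)+1)^2 + n < 0 := by
        have := h2 j hj; linarith
      rw [abs_of_neg hbneg, hd]
      have hb1 : (1:ℤ) ≤ -((N:ℤ)*(2*(j:ℤ)+1)^2 + n) := by linarith
      by_cases hj1 : j + 1 = j₀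
      · have : (j₀:ℤ) - (j:ℤ) = 1 := by exact_mod_cast (by omega : (j₀:ℤ) - j = 1)
        rw [this]; linarith
      · have hj2 : j + 2 ≤ j₀ := by omega
        have h3 := h2 (j₀ - 1) (by omega)
        have hc1 : ((j₀ - 1 : ℕ) : ℤ) = (j₀:ℤ) - 1 := by omega
        rw [hc1] at h3
        have hd2 : (2:ℤ) ≤ (j₀:ℤ) - (j:ℤ) := by exact_mod_cast (by omega : (2:ℤ) ≤ (j₀:ℤ) - j)
        -- -b ≥ 4N(j₀-j-1)(j₀+j) + 1 ≥ 4(d-1)d + 1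
        have hb2 : 4*((j₀:ℤ)-j-1)*((j₀:ℤ)-j) + 1 ≤ -((N:ℤ)*(2*(j:ℤ)+1)^2 + n) := by
          nlinarith [mul_le_mul_of_nonneg_left
            (show ((j₀:ℤ)-j-1)*((j₀:ℤ)-j) ≤ ((j₀:ℤ)-j-1)*((j₀:ℤ)+j) from by nlinarith) (by linarith : (0:ℤ) ≤ (N:ℤ))]
        linarith [quad_ineq hd2]

def oddEquiv : ℕ ≃ {k : ℕ // Odd k} where
  toFun j := ⟨2*j+1, ⟨j, rfl⟩⟩
  invFun k := k.1/2
  left_inv j := by show (2*j+1)/2 = j; omega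
  right_inv k := Subtype.ext (by show 2*(k.1/2)+1 = k.1; obtain ⟨m, hm⟩ := k.2; omega)

lemma term_eq (N : ℕ) (hN : 0 < N) (n : ℤ) (j : ℕ) :
    lam (2*j+1) + (1/(4*(N:ℝ))) * (n:ℝ) = (((N:ℤ)*(2*(j:ℤ)+1)^2 + n : ℤ) : ℝ) / (4*(N:ℝ)) := by
  have hNR : (0:ℝ) < (N:ℝ) := by exact_mod_cast hN
  unfold lam
  push_cast
  field_simp

lemma term_bound (N : ℕ) (hN : 0 < N) (n : ℤ) (j j₀ : ℕ)
    (hb : ((Nat.dist j j₀ : ℤ) + 1)^2 ≤ 4 * |(N:ℤ)*(2*(j:ℤ)+1)^2 + n|)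
    (hbne : (N:ℤ)*(2*(j:ℤ)+1)^2 + n ≠ 0) :
    |1 / (lam (2*j+1) + (1/(4*(N:ℝ))) * (n:ℝ))| ≤ (16*(N:ℝ))/((Nat.dist j j₀ : ℝ)+1)^2 := by
  have hNR : (0:ℝ) < (N:ℝ) := by exact_mod_cast hN
  rw [term_eq N hN n j]
  set b : ℤ := (N:ℤ)*(2*(j:ℤ)+1)^2 + n with hbdef
  have hbR : ((b:ℝ)) ≠ 0 := Int.cast_ne_zero.mpr hbne
  have habs : (0:ℝ) < |(b:ℝ)| := abs_pos.mpr hbR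
  rw [one_div, abs_inv, abs_div, abs_of_pos (by positivity : (0:ℝ) < 4*(N:ℝ)), inv_div]
  rw [div_le_div_iff₀ habs (by positivity)]
  have hcast : ((Nat.dist j j₀ : ℝ) + 1)^2 ≤ 4 * |(b:ℝ)| := by
    have := hb
    have h2 : (|(b:ℝ)|) = ((|b| : ℤ) : ℝ) := by push_cast; rfl
    rw [h2]
    exact_mod_cast hb
  nlinarith [habs, hNR, sq_nonneg ((Nat.dist j j₀ : ℝ) + 1)]

end Aux

/-- Let `N` be a positive integer, `ω = 1/(4N)`, and
`S = ℤ \ {−Nk² : k ∈ D}` (so that `λ_k + ωn ≠ 0` for all `k ∈ D` whenever `n ∈ S`).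
Then for every `n ∈ S` the series `m_n = ∑_{k ∈ D} 1/(λ_k + ωn)` converges absolutely and
`sup_{n ∈ S} |m_n| < ∞`; consequently there is a constant `C` such that
`∑_{n ∈ S} |m_n q_n|² ≤ C ∑_{n ∈ S} |q_n|²` for every square-summable family `(q_n)_{n ∈ S}`. -/
theorem stmt4 (N : ℕ) (hN : 0 < N) :
    let ω : ℝ := 1 / (4 * (N : ℝ))
    let S : Set ℤ := {n : ℤ | ∀ k : ℕ, Odd k → n ≠ -(N : ℤ) * (k : ℤ) ^ 2}
    let m : ℤ → ℝ := fun n => ∑' k : {k : ℕ // Odd k}, 1 / (lam k.1 + ω * (n : ℝ))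
    (∀ n ∈ S, Summable (fun k : {k : ℕ // Odd k} => |1 / (lam k.1 + ω * (n : ℝ))|)) ∧
    (∃ M : ℝ, ∀ n ∈ S, |m n| ≤ M) ∧
    ∃ C : ℝ, ∀ q : ℤ → ℂ, Summable (fun n : S => ‖q n.1‖ ^ 2) →
      Summable (fun n : S => ‖(m n.1 : ℂ) * q n.1‖ ^ 2) ∧
      (∑' n : S, ‖(m n.1 : ℂ) * q n.1‖ ^ 2) ≤ C * ∑' n : S, ‖q n.1‖ ^ 2 := by
  intro ω S m
  have hNR : (0:ℝ) < (N:ℝ) := by exact_mod_cast hN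
  -- basic facts for n ∈ S
  have hbne : ∀ n ∈ S, ∀ j : ℕ, (N:ℤ)*(2*(j:ℤ)+1)^2 + n ≠ 0 := by
    intro n hn j h
    refine hn (2*j+1) ⟨j, rfl⟩ ?_
    push_cast
    linarith [h]
  have key : ∀ n ∈ S, ∃ j₀ : ℕ, ∀ j : ℕ,
      |1 / (lam ((oddEquiv j).1) + ω * (n : ℝ))| ≤ (16*(N:ℝ))/((Nat.dist j j₀ : ℝ)+1)^2 := by
    intro n hn
    obtain ⟨j₀, hj₀⟩ := exists_j0 N hN n (hbne n hn)
    exact ⟨j₀, fun j => term_bound N hN n j j₀ (hj₀ j) (hbne n hn j)⟩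
  -- part 1
  have part1 : ∀ n ∈ S, Summable (fun k : {k : ℕ // Odd k} => |1 / (lam k.1 + ω * (n : ℝ))|) := by
    intro n hn
    obtain ⟨j₀, hj₀⟩ := key n hn
    rw [← oddEquiv.summable_iff]
    refine Summable.of_nonneg_of_le (fun j => abs_nonneg _) hj₀ (maj_summable _ j₀)
  -- uniform bound
  have hMb : ∀ n ∈ S, |m n| ≤ 64*(N:ℝ) := by
    intro n hn
    obtain ⟨j₀, hj₀⟩ := key n hn
    have hsum := part1 n hn
    have h1 : |m n| ≤ ∑' k : {k : ℕ // Odd k}, |1 / (lam k.1 + ω * (n : ℝ))| := by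
      simpa only [Real.norm_eq_abs] using
        norm_tsum_le_tsum_norm (f := fun k : {k : ℕ // Odd k} => 1 / (lam k.1 + ω * (n : ℝ)))
          (by simpa only [Real.norm_eq_abs] using hsum)
    have h2 : ∑' k : {k : ℕ // Odd k}, |1 / (lam k.1 + ω * (n : ℝ))|
        = ∑' j : ℕ, |1 / (lam ((oddEquiv j).1) + ω * (n : ℝ))| :=
      (oddEquiv.tsum_eq _).symm
    have h3 : ∑' j : ℕ, |1 / (lam ((oddEquiv j).1) + ω * (n : ℝ))|
        ≤ ∑' j : ℕ, (16*(N:ℝ))/((Nat.dist j j₀ : ℝ)+1)^2 := by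
      refine Summable.tsum_le_tsum hj₀ ?_ (maj_summable _ j₀)
      rw [← oddEquiv.summable_iff] at hsum
      exact hsum
    have h4 := maj_tsum_le (16*(N:ℝ)) (by positivity) j₀
    calc |m n| ≤ _ := h1
      _ = _ := h2
      _ ≤ _ := h3
      _ ≤ 4*(16*(N:ℝ)) := h4
      _ = 64*(N:ℝ) := by ring
  refine ⟨part1, ⟨64*(N:ℝ), hMb⟩, ⟨(64*(N:ℝ))^2, ?_⟩⟩
  intro q hq
  have hptw : ∀ n : S, ‖(m n.1 : ℂ) * q n.1‖ ^ 2 ≤ (64*(N:ℝ))^2 * ‖q n.1‖ ^ 2 := by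
    intro n
    rw [norm_mul, Complex.norm_real, Real.norm_eq_abs, mul_pow]
    have h := hMb n.1 n.2
    have h2 : |m n.1|^2 ≤ (64*(N:ℝ))^2 := by nlinarith [abs_nonneg (m n.1)]
    exact mul_le_mul_of_nonneg_right h2 (by positivity)
  have hsum2 : Summable (fun n : S => ‖(m n.1 : ℂ) * q n.1‖ ^ 2) :=
    Summable.of_nonneg_of_le (fun n => by positivity) hptw (hq.mul_left _)
  refine ⟨hsum2, ?_⟩
  calc ∑' n : S, ‖(m n.1 : ℂ) * q n.1‖ ^ 2
      ≤ ∑' n : S, (64*(N:ℝ))^2 * ‖q n.1‖ ^ 2 := Summable.tsum_le_tsum hptw hsum2 (hq.mul_left _)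
    _ = (64*(N:ℝ))^2 * ∑' n : S, ‖q n.1‖ ^ 2 := tsum_mul_left
end
end

section
/- For every T > 0, every q ∈ L²((0,T),ℂ), and every t ∈ [0,T], one has Σ_{k∈D} | ∫₀^t q(s) e^{iλ_k s} ds |² ≤ (T + 8π) ∫₀^t |q(s)|² ds. -/
open MeasureTheory Set Filter
open scoped Real Topology ENNReal
open scoped ComplexConjugate

set_option maxHeartbeats 1000000

noncomputable section

namespace Stmt6Aux


lemma hasSum_int_sq : HasSum (fun m : ℤ => 1 / (m:ℝ)^2) (π^2/6 + π^2/6 - 1/((0:ℤ):ℝ)^2) := by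
  apply HasSum.of_nat_of_neg
  · convert hasSum_zeta_two using 2 with n
    · rfl
    · simp
  · convert hasSum_zeta_two using 2 with n
    · rfl
    · norm_num

lemma sum_inv_gap_le {j : ℕ} (hj : Odd j) {F : Finset ℕ} (hF : ∀ k ∈ F, Odd k) :
    ∑ k ∈ F.erase j, (1:ℝ) / ((j:ℝ) - (k:ℝ))^2 ≤ 1 := by
  classical
  set e : ℕ → ℤ := fun k => ((j:ℤ) - k)/2 with he
  have key : ∀ k ∈ F.erase j, ((j:ℝ) - k) = 2 * ((e k : ℤ) : ℝ) := by
    intro k hk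
    have hk' : Odd k := hF k (Finset.mem_of_mem_erase hk)
    have hev : Even ((j:ℤ) - (k:ℤ)) :=
      (Int.odd_coe_nat j |>.mpr hj).sub_odd (Int.odd_coe_nat k |>.mpr hk')
    obtain ⟨m, hm⟩ := hev
    have hm2 : (j:ℤ) - k = 2 * m := by omega
    have : e k = m := by rw [he]; simp [hm2]
    rw [this]
    have : ((j:ℤ) - k : ℤ) = ((2:ℤ) * m) := hm2
    have := congrArg (fun z : ℤ => (z : ℝ)) this
    push_cast at this ⊢
    linarith
  have hinj : ∀ a ∈ F.erase j, ∀ b ∈ F.erase j, e a = e b → a = b := by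
    intro a ha b hb hab
    have h1 := key a ha
    have h2 := key b hb
    rw [hab] at h1
    have : (a:ℝ) = b := by linarith
    exact_mod_cast this
  have hterm : ∀ k ∈ F.erase j, (1:ℝ) / ((j:ℝ) - k)^2 = (1/4) * (1/((e k : ℤ):ℝ)^2) := by
    intro k hk
    rw [key k hk, mul_pow]
    rw [one_div, one_div, one_div, mul_inv]
    norm_num
  calc ∑ k ∈ F.erase j, (1:ℝ) / ((j:ℝ) - k)^2
      = ∑ k ∈ F.erase j, (1/4) * (1/((e k : ℤ):ℝ)^2) := Finset.sum_congr rfl hterm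
    _ = ∑ m ∈ (F.erase j).image e, (1/4) * (1/(m:ℝ)^2) := by
        rw [Finset.sum_image hinj]
    _ ≤ ∑' m : ℤ, (1/4) * (1/(m:ℝ)^2) := by
        refine Summable.sum_le_tsum _ (fun m _ => by positivity) (hasSum_int_sq.mul_left (1/4)).summable
    _ = (1/4) * (π^2/6 + π^2/6 - 1/((0:ℤ):ℝ)^2) := (hasSum_int_sq.mul_left (1/4)).tsum_eq
    _ ≤ 1 := by
        have h1 : π < 3.15 := Real.pi_lt_d2
        have h2 : 0 < π := Real.pi_pos
        norm_num
        nlinarith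




lemma osc_bound {t : ℝ} {j k : ℕ} (hj : Odd j) (hk : Odd k) (hjk : j ≠ k) :
    ‖∫ s in (0:ℝ)..t, Complex.exp ((Complex.I * ((lam k : ℂ) - (lam j : ℂ))) * (s:ℂ))‖
      ≤ 8 / ((j:ℝ) - (k:ℝ))^2 := by
  set r : ℝ := lam k - lam j with hrdef
  have hj1 : (1:ℝ) ≤ j := by exact_mod_cast hj.pos
  have hk1 : (1:ℝ) ≤ k := by exact_mod_cast hk.pos
  have hne : (k:ℝ) - j ≠ 0 := sub_ne_zero.mpr (by exact_mod_cast hjk.symm)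
  have hne' : (j:ℝ) - k ≠ 0 := sub_ne_zero.mpr (by exact_mod_cast hjk)
  have hfac : r = ((k:ℝ)-j)*((k:ℝ)+j)/4 := by simp only [hrdef, lam]; ring
  have hr : r ≠ 0 := by
    rw [hfac]
    exact div_ne_zero (mul_ne_zero hne (by positivity)) (by norm_num)
  set c : ℂ := Complex.I * ((lam k : ℂ) - (lam j : ℂ)) with hcdef
  have hcr : c = Complex.I * (r:ℂ) := by rw [hcdef, hrdef]; push_cast; ring
  have hc : c ≠ 0 := by
    rw [hcr]
    exact mul_ne_zero Complex.I_ne_zero (by exact_mod_cast Complex.ofReal_ne_zero.mpr hr)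
  rw [integral_exp_mul_complex hc]
  have hnorm1 : ∀ x : ℂ, ‖Complex.exp (c * x)‖ = Real.exp ((c * x).re) := fun x => by
    rw [Complex.norm_exp]
  have hre : ∀ x : ℝ, (c * (x:ℂ)).re = 0 := by
    intro x
    rw [hcr]
    simp [Complex.mul_re, Complex.mul_im]
  have hnc : ‖c‖ = |r| := by
    rw [hcr, norm_mul, Complex.norm_I, Complex.norm_real]
    simp [Real.norm_eq_abs]
  have hnum : ‖Complex.exp (c * (t:ℂ)) - Complex.exp (c * ((0:ℝ):ℂ))‖ ≤ 2 := by
    refine (norm_sub_le _ _).trans ?_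
    rw [hnorm1, hnorm1, hre t, hre 0, Real.exp_zero]
    norm_num
  have habs : |r| = |(k:ℝ)-j| * ((k:ℝ)+j)/4 := by
    rw [hfac, abs_div, abs_mul, abs_of_nonneg (by positivity : (0:ℝ) ≤ (k:ℝ)+j)]
    norm_num
  calc ‖(Complex.exp (c * (t:ℂ)) - Complex.exp (c * ((0:ℝ):ℂ))) / c‖
      = ‖Complex.exp (c * (t:ℂ)) - Complex.exp (c * ((0:ℝ):ℂ))‖ / ‖c‖ := norm_div _ _
    _ ≤ 2 / |r| := by
        rw [hnc]
        gcongr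
    _ ≤ 8 / ((j:ℝ) - (k:ℝ))^2 := by
        rw [div_le_div_iff₀ (abs_pos.mpr hr) (by positivity)]
        have h2 : |(k:ℝ)-j| ≤ (k:ℝ)+j := abs_le.mpr ⟨by linarith, by linarith⟩
        have h3 : ((j:ℝ)-k)^2 = |(k:ℝ)-j|^2 := by rw [sq_abs]; ring
        nlinarith [abs_nonneg ((k:ℝ)-j)]



lemma norm_toLp_sq {α : Type*} [MeasurableSpace α] {μ : Measure α} {b : α → ℂ}
    (hb : MemLp b 2 μ) : ‖hb.toLp b‖^2 = ∫ s, ‖b s‖^2 ∂μ := by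
  have h1 : ‖hb.toLp b‖^2 = RCLike.re (K := ℂ) (inner ℂ (hb.toLp b) (hb.toLp b)) :=
    (inner_self_eq_norm_sq _).symm
  rw [h1, MeasureTheory.L2.inner_def]
  rw [← integral_re (MeasureTheory.L2.integrable_inner _ _)]
  refine integral_congr_ae ?_
  filter_upwards [hb.coeFn_toLp] with s hs
  rw [hs]
  simp only [RCLike.inner_apply, RCLike.mul_conj]
  simp [← Complex.ofReal_pow, Complex.sq_norm, Complex.normSq_apply]

lemma cs_L2 {α : Type*} [MeasurableSpace α] {μ : Measure α} {a b : α → ℂ}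
    (ha : MemLp a 2 μ) (hb : MemLp b 2 μ) :
    ‖∫ s, a s * b s ∂μ‖ ≤ Real.sqrt (∫ s, ‖a s‖^2 ∂μ) * Real.sqrt (∫ s, ‖b s‖^2 ∂μ) := by
  set a' : α → ℂ := fun s => conj (a s) with ha'def
  have ha' : MemLp a' 2 μ := by
    refine MemLp.of_le ha ?_ (Eventually.of_forall fun s => by simp [ha'def])
    exact (Complex.continuous_conj.comp_aestronglyMeasurable ha.1)
  have hinner : (inner ℂ (ha'.toLp a') (hb.toLp b) : ℂ) = ∫ s, a s * b s ∂μ := by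
    rw [MeasureTheory.L2.inner_def]
    refine integral_congr_ae ?_
    filter_upwards [ha'.coeFn_toLp, hb.coeFn_toLp] with s h1 h2
    rw [h1, h2]
    simp [RCLike.inner_apply', ha'def, mul_comm]
  calc ‖∫ s, a s * b s ∂μ‖ = ‖(inner ℂ (ha'.toLp a') (hb.toLp b) : ℂ)‖ := by rw [hinner]
    _ ≤ ‖ha'.toLp a'‖ * ‖hb.toLp b‖ := norm_inner_le_norm _ _
    _ = Real.sqrt (‖ha'.toLp a'‖^2) * Real.sqrt (‖hb.toLp b‖^2) := by
        rw [Real.sqrt_sq (norm_nonneg _), Real.sqrt_sq (norm_nonneg _)]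
    _ = Real.sqrt (∫ s, ‖a s‖^2 ∂μ) * Real.sqrt (∫ s, ‖b s‖^2 ∂μ) := by
        rw [norm_toLp_sq ha', norm_toLp_sq hb]
        congr 1
        refine congrArg Real.sqrt (integral_congr_ae (Eventually.of_forall fun s => ?_))
        simp [ha'def]

lemma key (T : ℝ) (hT : 0 < T) (q : ℝ → ℂ) (hq : MemLp q 2 (volume.restrict (Ioc 0 T)))
    (t : ℝ) (ht : t ∈ Icc (0:ℝ) T) (F : Finset ℕ) (hF : ∀ k ∈ F, Odd k) :
    ∑ k ∈ F, ‖∫ s in (0:ℝ)..t, q s * Complex.exp (Complex.I * (lam k : ℂ) * (s:ℂ))‖^2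
      ≤ (T + 8 * π) * ∫ s in (0:ℝ)..t, ‖q s‖^2 := by
  classical
  obtain ⟨ht0, htT⟩ := ht
  set μt := volume.restrict (Ioc (0:ℝ) t) with hμt
  haveI : IsFiniteMeasure μt := by
    constructor
    rw [hμt, Measure.restrict_apply_univ, Real.volume_Ioc]
    exact ENNReal.ofReal_lt_top
  set E : ℕ → ℝ → ℂ := fun k s => Complex.exp (Complex.I * (lam k : ℂ) * (s:ℂ)) with hE
  set c : ℕ → ℂ := fun k => ∫ s in (0:ℝ)..t, q s * E k s with hc
  show (∑ k ∈ F, ‖c k‖^2) ≤ _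
  set S : ℝ := ∑ k ∈ F, ‖c k‖^2 with hSdef
  set f : ℝ → ℂ := fun s => ∑ k ∈ F, (starRingEnd ℂ) (c k) * E k s with hf
  have hQpos : 0 ≤ ∫ s in (0:ℝ)..t, ‖q s‖^2 :=
    intervalIntegral.integral_nonneg ht0 (fun s _ => sq_nonneg _)
  have hS0 : 0 ≤ S := Finset.sum_nonneg fun k _ => sq_nonneg _
  have hq2 : MemLp q 2 μt :=
    hq.mono_measure (Measure.restrict_mono (Ioc_subset_Ioc_right htT) le_rfl)
  have hqi : Integrable q μt := hq2.integrable one_le_two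
  have hEcont : ∀ k, Continuous (E k) := fun k =>
    Complex.continuous_exp.comp (continuous_const.mul Complex.continuous_ofReal)
  have hEnorm : ∀ k s, ‖E k s‖ = 1 := by
    intro k s
    rw [hE]
    rw [Complex.norm_exp]
    have h0 : (Complex.I * (lam k : ℂ) * (s:ℂ)).re = 0 := by
      simp [Complex.mul_re, Complex.mul_im]
    rw [h0, Real.exp_zero]
  have hcint : ∀ k, c k = ∫ s, q s * E k s ∂μt := fun k => by
    show (∫ s in (0:ℝ)..t, q s * E k s) = _
    rw [intervalIntegral.integral_of_le ht0]
  have hqE : ∀ k, Integrable (fun s => q s * E k s) μt := by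
    intro k
    have h := hqi.bdd_mul (hEcont k).aestronglyMeasurable (Eventually.of_forall fun s => le_of_eq (hEnorm k s))
    refine h.congr (Eventually.of_forall fun s => ?_)
    ring
  -- Step 1
  have hstep1 : ∫ s, q s * f s ∂μt = ∑ k ∈ F, (starRingEnd ℂ) (c k) * c k := by
    have h1 : ∀ s, q s * f s = ∑ k ∈ F, (starRingEnd ℂ) (c k) * (q s * E k s) := by
      intro s
      rw [hf, Finset.mul_sum]
      exact Finset.sum_congr rfl fun k _ => by ring
    simp_rw [h1]
    rw [integral_finset_sum _ (fun k _ => (hqE k).const_mul _)]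
    refine Finset.sum_congr rfl fun k _ => ?_
    rw [integral_const_mul, ← hcint k]
  have hsumS : (∑ k ∈ F, (starRingEnd ℂ) (c k) * c k) = ((S:ℝ) : ℂ) := by
    rw [hSdef]
    push_cast
    refine Finset.sum_congr rfl fun k _ => ?_
    rw [mul_comm, Complex.mul_conj, Complex.normSq_eq_norm_sq]
    push_cast
    ring
  have hfcont : Continuous f := continuous_finset_sum _ fun k _ => continuous_const.mul (hEcont k)
  have hf2 : MemLp f 2 μt := by
    refine MemLp.of_bound hfcont.aestronglyMeasurable (∑ k ∈ F, ‖c k‖)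
      (Eventually.of_forall fun s => ?_)
    rw [hf]
    refine (norm_sum_le _ _).trans (le_of_eq (Finset.sum_congr rfl fun k _ => ?_))
    rw [norm_mul, hEnorm k s, RCLike.norm_conj, mul_one]
  -- Gram matrix
  set G : ℕ → ℕ → ℂ := fun j k =>
    ∫ s in (0:ℝ)..t, Complex.exp ((Complex.I * ((lam k:ℂ) - (lam j:ℂ))) * (s:ℂ)) with hG
  have hGdiag : ∀ j, G j j = (t:ℂ) := by
    intro j
    rw [hG]
    simp
  have hconjE : ∀ j k (s:ℝ), (starRingEnd ℂ) (E j s) * E k s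
      = Complex.exp ((Complex.I * ((lam k:ℂ) - (lam j:ℂ))) * (s:ℂ)) := by
    intro j k s
    rw [hE, ← Complex.exp_conj, ← Complex.exp_add]
    congr 1
    simp only [map_mul, Complex.conj_I, Complex.conj_ofReal]
    ring
  have hptexp : ∀ s, (starRingEnd ℂ) (f s) * f s = ∑ j ∈ F, ∑ k ∈ F,
      (c j * (starRingEnd ℂ) (c k)) *
        Complex.exp ((Complex.I * ((lam k:ℂ) - (lam j:ℂ))) * (s:ℂ)) := by
    intro s
    rw [hf, map_sum, Finset.sum_mul_sum]
    refine Finset.sum_congr rfl fun j _ => Finset.sum_congr rfl fun k _ => ?_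
    rw [← hconjE j k s, map_mul, Complex.conj_conj]
    ring
  have hptre : ∀ s, ‖f s‖^2 = ((starRingEnd ℂ) (f s) * f s).re := by
    intro s
    rw [mul_comm, Complex.mul_conj, Complex.normSq_eq_norm_sq,
      Complex.ofReal_re]
  have hexpint : ∀ j k, Integrable
      (fun (s:ℝ) => Complex.exp ((Complex.I * ((lam k:ℂ) - (lam j:ℂ))) * (s:ℂ))) μt := by
    intro j k
    exact (Complex.continuous_exp.comp (continuous_const.mul Complex.continuous_ofReal)).integrableOn_Ioc
  have hfint2 : Integrable (fun s => (starRingEnd ℂ) (f s) * f s) μt :=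
    ((Complex.continuous_conj.comp hfcont).mul hfcont).integrableOn_Ioc
  have hIG : ∫ s, (starRingEnd ℂ) (f s) * f s ∂μt
      = ∑ j ∈ F, ∑ k ∈ F, (c j * (starRingEnd ℂ) (c k)) * G j k := by
    simp_rw [hptexp]
    rw [integral_finset_sum _ (fun j _ => integrable_finset_sum _
      (fun k _ => (hexpint j k).const_mul _))]
    refine Finset.sum_congr rfl fun j _ => ?_
    rw [integral_finset_sum _ (fun k _ => (hexpint j k).const_mul _)]
    refine Finset.sum_congr rfl fun k _ => ?_
    rw [integral_const_mul]
    congr 1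
    exact (intervalIntegral.integral_of_le ht0).symm
  -- Step 3 : L² norm of f bounded
  have hFnorm : ∫ s, ‖f s‖^2 ∂μt ≤ (t + 8) * S := by
    have h0 : ∫ s, ‖f s‖^2 ∂μt
        = (∑ j ∈ F, ∑ k ∈ F, (c j * (starRingEnd ℂ) (c k)) * G j k).re := by
      have hint := integral_re hfint2
      simp only [RCLike.re_to_complex] at hint
      rw [← hIG, ← hint]
      exact integral_congr_ae (Eventually.of_forall fun s => hptre s)
    rw [h0]
    have hre : (∑ j ∈ F, ∑ k ∈ F, (c j * (starRingEnd ℂ) (c k)) * G j k).re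
        ≤ ∑ j ∈ F, ∑ k ∈ F, ‖c j‖ * ‖c k‖ * ‖G j k‖ := by
      refine (Complex.re_le_norm _).trans ?_
      refine (norm_sum_le _ _).trans (Finset.sum_le_sum fun j _ => ?_)
      refine (norm_sum_le _ _).trans (le_of_eq (Finset.sum_congr rfl fun k _ => ?_))
      rw [norm_mul, norm_mul, RCLike.norm_conj]
    refine hre.trans ?_
    have hsplit : ∀ j ∈ F, ∑ k ∈ F, ‖c j‖ * ‖c k‖ * ‖G j k‖
        ≤ ‖c j‖^2 * t + ∑ k ∈ F.erase j, ‖c j‖ * ‖c k‖ * (8 / ((j:ℝ)-(k:ℝ))^2) := by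
      intro j hjF
      rw [← Finset.add_sum_erase _ _ hjF]
      have hdiag : ‖c j‖ * ‖c j‖ * ‖G j j‖ = ‖c j‖^2 * t := by
        rw [hGdiag j, Complex.norm_real, Real.norm_eq_abs, abs_of_nonneg ht0]
        ring
      rw [hdiag]
      refine add_le_add le_rfl (Finset.sum_le_sum fun k hk => ?_)
      have hjk : j ≠ k := (Finset.ne_of_mem_erase hk).symm
      have hodd_k : Odd k := hF k (Finset.mem_of_mem_erase hk)
      have := osc_bound (t := t) (hF j hjF) hodd_k hjk
      have hGb : ‖G j k‖ ≤ 8 / ((j:ℝ)-(k:ℝ))^2 := by rw [hG]; exact this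
      exact mul_le_mul_of_nonneg_left hGb (by positivity)
    refine (Finset.sum_le_sum hsplit).trans ?_
    rw [Finset.sum_add_distrib]
    have hdiagsum : ∑ j ∈ F, ‖c j‖^2 * t = t * S := by
      rw [hSdef, Finset.mul_sum]
      exact Finset.sum_congr rfl fun j _ => by ring
    rw [hdiagsum]
    have hoff : ∑ j ∈ F, ∑ k ∈ F.erase j, ‖c j‖ * ‖c k‖ * (8 / ((j:ℝ)-(k:ℝ))^2)
        ≤ 8 * S := by
      have hterm : ∀ j ∈ F, ∀ k ∈ F.erase j,
          ‖c j‖ * ‖c k‖ * (8 / ((j:ℝ)-(k:ℝ))^2)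
            ≤ 4 * ‖c j‖^2 * (1/((j:ℝ)-(k:ℝ))^2) + 4 * ‖c k‖^2 * (1/((j:ℝ)-(k:ℝ))^2) := by
        intro j _ k _
        have h1 : (0:ℝ) ≤ 1/((j:ℝ)-(k:ℝ))^2 := by positivity
        have h2 : ‖c j‖ * ‖c k‖ ≤ (‖c j‖^2 + ‖c k‖^2)/2 := by nlinarith [sq_nonneg (‖c j‖ - ‖c k‖)]
        have h3 : ‖c j‖ * ‖c k‖ * (8 / ((j:ℝ)-(k:ℝ))^2)
            = (‖c j‖ * ‖c k‖) * 8 * (1/((j:ℝ)-(k:ℝ))^2) := by ring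
        rw [h3]
        nlinarith [mul_le_mul_of_nonneg_right h2 h1, norm_nonneg (c j), norm_nonneg (c k)]
      have hpc1 : ∑ j ∈ F, ∑ k ∈ F.erase j, 4 * ‖c j‖^2 * (1/((j:ℝ)-(k:ℝ))^2) ≤ 4 * S := by
        rw [hSdef, Finset.mul_sum]
        refine Finset.sum_le_sum fun j hjF => ?_
        have : ∑ k ∈ F.erase j, 4 * ‖c j‖^2 * (1/((j:ℝ)-(k:ℝ))^2)
            = 4 * ‖c j‖^2 * ∑ k ∈ F.erase j, (1:ℝ)/((j:ℝ)-(k:ℝ))^2 := by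
          rw [Finset.mul_sum]
        rw [this]
        have hb := sum_inv_gap_le (hF j hjF) hF
        nlinarith [norm_nonneg (c j), sq_nonneg ‖c j‖]
      have hpc2 : ∑ j ∈ F, ∑ k ∈ F.erase j, 4 * ‖c k‖^2 * (1/((j:ℝ)-(k:ℝ))^2) ≤ 4 * S := by
        have hswap : ∑ j ∈ F, ∑ k ∈ F.erase j, 4 * ‖c k‖^2 * (1/((j:ℝ)-(k:ℝ))^2)
            = ∑ k ∈ F, ∑ j ∈ F.erase k, 4 * ‖c k‖^2 * (1/((j:ℝ)-(k:ℝ))^2) := by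
          refine Finset.sum_comm' fun x y => ?_
          constructor
          · rintro ⟨hx, hy⟩
            exact ⟨Finset.mem_erase.mpr ⟨(Finset.ne_of_mem_erase hy).symm, hx⟩,
              Finset.mem_of_mem_erase hy⟩
          · rintro ⟨hx, hy⟩
            exact ⟨Finset.mem_of_mem_erase hx,
              Finset.mem_erase.mpr ⟨(Finset.ne_of_mem_erase hx).symm, hy⟩⟩
        rw [hswap, hSdef, Finset.mul_sum]
        refine Finset.sum_le_sum fun k hkF => ?_
        have heq : ∑ j ∈ F.erase k, 4 * ‖c k‖^2 * (1/((j:ℝ)-(k:ℝ))^2)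
            = 4 * ‖c k‖^2 * ∑ j ∈ F.erase k, (1:ℝ)/((k:ℝ)-(j:ℝ))^2 := by
          rw [Finset.mul_sum]
          refine Finset.sum_congr rfl fun j _ => ?_
          have : ((j:ℝ)-(k:ℝ))^2 = ((k:ℝ)-(j:ℝ))^2 := by ring
          rw [this]
        rw [heq]
        have hb := sum_inv_gap_le (hF k hkF) hF
        nlinarith [norm_nonneg (c k), sq_nonneg ‖c k‖]
      calc ∑ j ∈ F, ∑ k ∈ F.erase j, ‖c j‖ * ‖c k‖ * (8 / ((j:ℝ)-(k:ℝ))^2)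
          ≤ ∑ j ∈ F, ∑ k ∈ F.erase j,
              (4 * ‖c j‖^2 * (1/((j:ℝ)-(k:ℝ))^2) + 4 * ‖c k‖^2 * (1/((j:ℝ)-(k:ℝ))^2)) :=
            Finset.sum_le_sum fun j hj => Finset.sum_le_sum fun k hk => hterm j hj k hk
        _ = ∑ j ∈ F, ∑ k ∈ F.erase j, 4 * ‖c j‖^2 * (1/((j:ℝ)-(k:ℝ))^2)
              + ∑ j ∈ F, ∑ k ∈ F.erase j, 4 * ‖c k‖^2 * (1/((j:ℝ)-(k:ℝ))^2) := by
            rw [← Finset.sum_add_distrib]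
            exact Finset.sum_congr rfl fun j _ => Finset.sum_add_distrib
        _ ≤ 4 * S + 4 * S := add_le_add hpc1 hpc2
        _ = 8 * S := by ring
    linarith
  -- Step 4: combine
  set Q2 : ℝ := ∫ s, ‖q s‖^2 ∂μt with hQ2
  have hQ2' : Q2 = ∫ s in (0:ℝ)..t, ‖q s‖^2 := by
    rw [hQ2, intervalIntegral.integral_of_le ht0]
  have hQ2pos : 0 ≤ Q2 := by rw [hQ2']; exact hQpos
  have hCS : S ≤ Real.sqrt Q2 * Real.sqrt ((t+8)*S) := by
    have h1 : S = ‖∫ s, q s * f s ∂μt‖ := by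
      rw [hstep1, hsumS, Complex.norm_real, Real.norm_eq_abs, abs_of_nonneg hS0]
    calc S = ‖∫ s, q s * f s ∂μt‖ := h1
      _ ≤ Real.sqrt (∫ s, ‖q s‖^2 ∂μt) * Real.sqrt (∫ s, ‖f s‖^2 ∂μt) := cs_L2 hq2 hf2
      _ ≤ Real.sqrt Q2 * Real.sqrt ((t+8)*S) := by
          gcongr
  have hfin : S ≤ (t+8) * Q2 := by
    rcases hS0.eq_or_lt with h|h
    · rw [← h]
      positivity
    · have hts : 0 ≤ (t+8)*S := by positivity
      have h2 : S^2 ≤ Q2 * ((t+8)*S) := by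
        nlinarith [Real.sq_sqrt hQ2pos, Real.sq_sqrt hts,
          Real.sqrt_nonneg Q2, Real.sqrt_nonneg ((t+8)*S)]
      nlinarith
  have hπ : 3 < π := Real.pi_gt_three
  have hfinal : S ≤ (T + 8*π) * Q2 := by nlinarith
  rw [hQ2'] at hfinal
  exact hfinal

end Stmt6Aux

/-- For every `T > 0`, every `q ∈ L²((0,T),ℂ)`, and every `t ∈ [0,T]`,
`∑_{k ∈ D} |∫₀ᵗ q(s) e^{iλ_k s} ds|² ≤ (T + 8π) ∫₀ᵗ |q(s)|² ds`. -/
theorem stmt6 (T : ℝ) (hT : 0 < T) (q : ℝ → ℂ)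
    (hq : MemLp q 2 (volume.restrict (Ioc 0 T)))
    (t : ℝ) (ht : t ∈ Icc (0:ℝ) T) :
    Summable (fun k : {k : ℕ // Odd k} =>
      ‖∫ s in (0:ℝ)..t, q s * Complex.exp (Complex.I * (lam k.1 : ℂ) * (s:ℂ))‖ ^ 2) ∧
    (∑' k : {k : ℕ // Odd k},
        ‖∫ s in (0:ℝ)..t, q s * Complex.exp (Complex.I * (lam k.1 : ℂ) * (s:ℂ))‖ ^ 2)
      ≤ (T + 8 * π) * ∫ s in (0:ℝ)..t, ‖q s‖ ^ 2 := by
  have key' : ∀ Fs : Finset {k : ℕ // Odd k},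
      ∑ k ∈ Fs, ‖∫ s in (0:ℝ)..t, q s * Complex.exp (Complex.I * (lam k.1 : ℂ) * (s:ℂ))‖ ^ 2
        ≤ (T + 8 * π) * ∫ s in (0:ℝ)..t, ‖q s‖ ^ 2 := by
    intro Fs
    have h := Stmt6Aux.key T hT q hq t ht (Fs.image Subtype.val)
      (fun k hk => by
        obtain ⟨⟨k', hk'⟩, _, rfl⟩ := Finset.mem_image.mp hk
        exact hk')
    refine le_trans (le_of_eq ?_) h
    rw [Finset.sum_image (fun x _ y _ hxy => Subtype.val_injective hxy)]
  have hnn : (0 : {k : ℕ // Odd k} → ℝ) ≤ fun k : {k : ℕ // Odd k} =>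
      ‖∫ s in (0:ℝ)..t, q s * Complex.exp (Complex.I * (lam k.1 : ℂ) * (s:ℂ))‖ ^ 2 :=
    fun k => sq_nonneg _
  have hsum := summable_of_sum_le hnn key'
  exact ⟨hsum, Summable.tsum_le_of_sum_le hsum key'⟩
end
end

section
/- For every T > 0 there exists a constant C = C(T) > 0 such that for every H¹(0,T) function q with derivative g one has sup_{t∈[0,T]} Σ_{k∈D} (1 + λ_k) | ∫₀^t q(s) e^{−iλ_k(t−s)} ds |² ≤ C ( |q(0)|² + ‖q‖²_{L²(0,T)} + ‖g‖²_{L²(0,T)} ). (This quantity controls the H¹₀(−π,π)-norm of the wavefunction F(q,t) = (i/√π) Σ_{k∈D} (∫₀^t q(s) e^{−iλ_k(t−s)} ds) ψ_k, where ψ_k(x) = (1/√π) cos(kx/2).) -/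
open MeasureTheory Set Filter
open scoped Real Topology ENNReal

noncomputable section

/-! ### Auxiliary lemmas -/

lemma norm_exp_I_mul_real (x : ℝ) : ‖Complex.exp (Complex.I * x)‖ = 1 := by
  rw [Complex.norm_exp]
  simp

/-- Norm bound `2/l` for the elementary oscillatory integral. -/
lemma exp_int_norm_le {l a b t : ℝ} (hl : 0 < l) :
    ‖∫ s in a..b, Complex.exp (-Complex.I * (l : ℂ) * ((t : ℂ) - (s : ℂ)))‖ ≤ 2 / l := by
  have hc : (Complex.I * (l : ℂ)) ≠ 0 := by
    simp [Complex.I_ne_zero, Complex.ofReal_ne_zero, hl.ne']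
  have key : (∫ s in a..b, Complex.exp (-Complex.I * (l : ℂ) * ((t : ℂ) - (s : ℂ))))
      = Complex.exp (Complex.I * ((-(l*t) : ℝ) : ℂ)) *
        ((Complex.exp ((Complex.I * (l:ℂ)) * (b:ℝ)) - Complex.exp ((Complex.I * (l:ℂ)) * (a:ℝ)))
          / (Complex.I * (l:ℂ))) := by
    have : ∀ s : ℝ, Complex.exp (-Complex.I * (l : ℂ) * ((t : ℂ) - (s : ℂ)))
        = Complex.exp (Complex.I * ((-(l*t) : ℝ) : ℂ)) * Complex.exp ((Complex.I * (l:ℂ)) * (s:ℝ)) := by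
      intro s
      rw [← Complex.exp_add]
      congr 1
      push_cast
      ring
    rw [intervalIntegral.integral_congr (fun s _ => this s), intervalIntegral.integral_const_mul,
      integral_exp_mul_complex hc]
  rw [key, norm_mul, norm_exp_I_mul_real, one_mul, norm_div]
  have h1 : ‖Complex.I * (l:ℂ)‖ = l := by
    rw [norm_mul, Complex.norm_I, one_mul, Complex.norm_real, Real.norm_eq_abs, abs_of_pos hl]
  rw [h1]
  have h2 : ‖Complex.exp ((Complex.I * (l:ℂ)) * (b:ℝ)) - Complex.exp ((Complex.I * (l:ℂ)) * (a:ℝ))‖ ≤ 2 := by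
    have hb : ((Complex.I * (l:ℂ)) * (b:ℝ)) = Complex.I * ((l*b : ℝ) : ℂ) := by push_cast; ring
    have ha : ((Complex.I * (l:ℂ)) * (a:ℝ)) = Complex.I * ((l*a : ℝ) : ℂ) := by push_cast; ring
    calc ‖_ - _‖ ≤ ‖Complex.exp ((Complex.I * (l:ℂ)) * (b:ℝ))‖ + ‖Complex.exp ((Complex.I * (l:ℂ)) * (a:ℝ))‖ := norm_sub_le _ _
    _ ≤ 2 := by rw [hb, ha, norm_exp_I_mul_real, norm_exp_I_mul_real]; norm_num
  gcongr

/-- Fubini on the triangle `{0 < u ≤ s ≤ t}`. -/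
lemma swap_lemma {g : ℝ → ℂ} {t : ℝ} (hg : IntegrableOn g (Ioc 0 t)) (φ : ℝ → ℂ)
    (hφ : Continuous φ) :
    ∫ s in Ioc (0:ℝ) t, (∫ u in Ioc (0:ℝ) s, g u) * φ s
      = ∫ u in Ioc (0:ℝ) t, g u * ∫ s in u..t, φ s := by
  set F : ℝ × ℝ → ℂ := fun p => ({p : ℝ × ℝ | 0 < p.2 ∧ p.2 ≤ p.1}).indicator
    (fun p => φ p.1 * g p.2) p with hF
  have hmeas : MeasurableSet {p : ℝ × ℝ | 0 < p.2 ∧ p.2 ≤ p.1} := by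
    have : {p : ℝ × ℝ | 0 < p.2 ∧ p.2 ≤ p.1}
        = {p : ℝ × ℝ | 0 < p.2} ∩ {p : ℝ × ℝ | p.2 ≤ p.1} := rfl
    rw [this]
    exact (measurableSet_lt measurable_const measurable_snd).inter
      (measurableSet_le measurable_snd measurable_fst)
  have hφint : Integrable φ (volume.restrict (Ioc 0 t)) := hφ.integrableOn_Ioc
  have hFint : Integrable F ((volume.restrict (Ioc (0:ℝ) t)).prod (volume.restrict (Ioc (0:ℝ) t))) :=
    (Integrable.mul_prod hφint hg).indicator hmeas
  have lhs_eq : ∫ s in Ioc (0:ℝ) t, (∫ u in Ioc (0:ℝ) s, g u) * φ s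
      = ∫ s in Ioc (0:ℝ) t, ∫ u in Ioc (0:ℝ) t, F (s, u) := by
    refine setIntegral_congr_fun measurableSet_Ioc (fun s hs => ?_)
    have h1 : ∀ u : ℝ, F (s, u) = (Ioc (0:ℝ) s).indicator (fun u => φ s * g u) u := by
      intro u
      simp only [hF, Set.indicator_apply, Set.mem_setOf_eq, Set.mem_Ioc]
    simp_rw [h1]
    rw [setIntegral_indicator measurableSet_Ioc,
      Set.inter_eq_self_of_subset_right (Ioc_subset_Ioc_right hs.2),
      integral_const_mul]
    ring
  have rhs_eq : ∫ u in Ioc (0:ℝ) t, ∫ s in Ioc (0:ℝ) t, F (s, u)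
      = ∫ u in Ioc (0:ℝ) t, g u * ∫ s in u..t, φ s := by
    refine setIntegral_congr_fun measurableSet_Ioc (fun u hu => ?_)
    have h1 : ∀ s : ℝ, F (s, u) = (Ici u).indicator (fun s => φ s * g u) s := by
      intro s
      simp only [hF, Set.indicator_apply, Set.mem_setOf_eq, Set.mem_Ici]
      by_cases h : u ≤ s <;> simp [h, hu.1]
    simp_rw [h1]
    rw [setIntegral_indicator measurableSet_Ici]
    have h2 : Ioc (0:ℝ) t ∩ Ici u = Icc u t := by
      ext s
      simp only [mem_inter_iff, mem_Ioc, mem_Ici, mem_Icc]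
      constructor
      · rintro ⟨⟨_, h2⟩, h3⟩; exact ⟨h3, h2⟩
      · rintro ⟨h1', h2⟩; exact ⟨⟨lt_of_lt_of_le hu.1 h1', h2⟩, h1'⟩
    rw [h2, integral_Icc_eq_integral_Ioc, ← intervalIntegral.integral_of_le hu.2,
      intervalIntegral.integral_mul_const]
    ring
  rw [lhs_eq, ← rhs_eq]
  exact integral_integral_swap hFint

/-- Integration-by-parts style bound for a single oscillatory mode. -/
lemma key_bound {T : ℝ} {q g : ℝ → ℂ} (hg : IntegrableOn g (Ioc 0 T))
    (hq : ∀ s ∈ Icc (0:ℝ) T, q s = q 0 + ∫ u in (0:ℝ)..s, g u)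
    {t : ℝ} (ht : t ∈ Icc (0:ℝ) T) {l : ℝ} (hl : 0 < l) :
    ‖∫ s in (0:ℝ)..t, q s * Complex.exp (-Complex.I * (l:ℂ) * ((t:ℂ) - (s:ℂ)))‖
      ≤ (2 / l) * (‖q 0‖ + ∫ u in Ioc (0:ℝ) T, ‖g u‖) := by
  set φ : ℝ → ℂ := fun s => Complex.exp (-Complex.I * (l:ℂ) * ((t:ℂ) - (s:ℂ))) with hφdef
  have hφcont : Continuous φ := by
    apply Complex.continuous_exp.comp
    continuity
  have hgt : IntegrableOn g (Ioc 0 t) := hg.mono_set (Ioc_subset_Ioc_right ht.2)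
  set h : ℝ → ℂ := fun s => ∫ u in Ioc (0:ℝ) s, g u with hhdef
  have hIcc : IntegrableOn g (Icc 0 t) := by
    rwa [← integrableOn_Icc_iff_integrableOn_Ioc] at hgt
  have hcont : ContinuousOn h (Icc 0 t) := intervalIntegral.continuousOn_primitive hIcc
  have hcongr : ∀ s ∈ uIcc (0:ℝ) t, q s * φ s = q 0 * φ s + h s * φ s := by
    intro s hs
    rw [uIcc_of_le ht.1] at hs
    rw [hq s ⟨hs.1, le_trans hs.2 ht.2⟩, intervalIntegral.integral_of_le hs.1]
    ring
  rw [intervalIntegral.integral_congr hcongr]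
  have int1 : IntervalIntegrable (fun s => q 0 * φ s) volume 0 t :=
    ((continuous_const.mul hφcont)).intervalIntegrable _ _
  have int2 : IntervalIntegrable (fun s => h s * φ s) volume 0 t := by
    apply ContinuousOn.intervalIntegrable
    rw [uIcc_of_le ht.1]
    exact hcont.mul hφcont.continuousOn
  rw [intervalIntegral.integral_add int1 int2]
  have bound1 : ‖∫ s in (0:ℝ)..t, q 0 * φ s‖ ≤ ‖q 0‖ * (2 / l) := by
    rw [intervalIntegral.integral_const_mul, norm_mul]
    exact mul_le_mul_of_nonneg_left (exp_int_norm_le hl) (norm_nonneg _)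
  have bound2 : ‖∫ s in (0:ℝ)..t, h s * φ s‖ ≤ (2 / l) * ∫ u in Ioc (0:ℝ) T, ‖g u‖ := by
    rw [intervalIntegral.integral_of_le ht.1, swap_lemma hgt φ hφcont]
    have step1 : ‖∫ u in Ioc (0:ℝ) t, g u * ∫ s in u..t, φ s‖
        ≤ ∫ u in Ioc (0:ℝ) t, (2 / l) * ‖g u‖ := by
      apply norm_integral_le_of_norm_le (hgt.norm.const_mul _)
      filter_upwards with u
      rw [norm_mul, mul_comm]
      exact mul_le_mul_of_nonneg_right (exp_int_norm_le hl) (norm_nonneg _)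
    refine step1.trans ?_
    rw [integral_const_mul]
    apply mul_le_mul_of_nonneg_left _ (by positivity)
    exact setIntegral_mono_set hg.norm (Filter.Eventually.of_forall fun u => norm_nonneg _)
      (HasSubset.Subset.eventuallyLE (Ioc_subset_Ioc_right ht.2))
  calc ‖_ + _‖ ≤ ‖∫ s in (0:ℝ)..t, q 0 * φ s‖ + ‖∫ s in (0:ℝ)..t, h s * φ s‖ := norm_add_le _ _
  _ ≤ ‖q 0‖ * (2 / l) + (2 / l) * ∫ u in Ioc (0:ℝ) T, ‖g u‖ := add_le_add bound1 bound2
  _ = (2 / l) * (‖q 0‖ + ∫ u in Ioc (0:ℝ) T, ‖g u‖) := by ring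

/-- Hölder: the `L¹(0,T)` norm is bounded by `√T` times the `L²(0,T)` norm. -/
lemma l1_le_sqrt_l2 {T : ℝ} (hT : 0 < T) {g : ℝ → ℂ}
    (hg : MemLp g 2 (volume.restrict (Ioc 0 T))) :
    (∫ u in Ioc (0:ℝ) T, ‖g u‖) ≤ Real.sqrt T * L2norm T g := by
  set μ := volume.restrict (Ioc (0:ℝ) T) with hμ
  have hμuniv : μ Set.univ = ENNReal.ofReal T := by
    rw [hμ, Measure.restrict_apply_univ, Real.volume_Ioc, sub_zero]
  have hle := eLpNorm_le_eLpNorm_mul_rpow_measure_univ (p := 1) (q := 2) one_le_two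
    hg.aestronglyMeasurable (f := g) (μ := μ)
  have hexp : 1 / (1:ℝ≥0∞).toReal - 1 / (2:ℝ≥0∞).toReal = (1/2 : ℝ) := by norm_num
  rw [hexp, hμuniv] at hle
  have hL : (∫ u in Ioc (0:ℝ) T, ‖g u‖) = (eLpNorm g 1 μ).toReal := by
    rw [eLpNorm_one_eq_lintegral_enorm, integral_norm_eq_lintegral_enorm hg.aestronglyMeasurable]
  have hfin : eLpNorm g 2 μ * (ENNReal.ofReal T) ^ (1/2 : ℝ) ≠ ∞ :=
    ENNReal.mul_ne_top hg.eLpNorm_ne_top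
      (ENNReal.rpow_ne_top_of_nonneg (by norm_num) ENNReal.ofReal_ne_top)
  have := ENNReal.toReal_mono hfin hle
  rw [hL]
  refine this.trans_eq ?_
  rw [ENNReal.toReal_mul, ← ENNReal.toReal_rpow, ENNReal.toReal_ofReal hT.le,
    L2norm]
  rw [mul_comm, Real.sqrt_eq_rpow]

/-- Summability of the weights `(1 + λ_k) (2/λ_k)²` over odd `k`. -/
lemma sum_c : Summable (fun k : {k : ℕ // Odd k} => (1 + lam k.1) * (2 / lam k.1) ^ 2) := by
  have hsum : Summable (fun n : ℕ => 80 * (1 / (n:ℝ) ^ 2)) :=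
    (Real.summable_one_div_nat_pow.mpr one_lt_two).mul_left 80
  have hsub : Summable (fun k : {k : ℕ // Odd k} => 80 * (1 / (k.1:ℝ) ^ 2)) :=
    hsum.subtype _
  refine Summable.of_nonneg_of_le (fun k => ?_) (fun k => ?_) hsub
  · have : 0 ≤ lam k.1 := by unfold lam; positivity
    positivity
  · obtain ⟨k, hk⟩ := k
    have hk1 : 1 ≤ k := Nat.one_le_iff_ne_zero.mpr (by rintro rfl; exact (Nat.not_odd_iff_even.mpr Even.zero) hk)
    have hx : (1:ℝ) ≤ (k:ℝ) := by exact_mod_cast hk1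
    have hx2 : (0:ℝ) < (k:ℝ)^2 := by positivity
    unfold lam
    have key : (1 + (k:ℝ)^2/4) * (2 / ((k:ℝ)^2/4)) ^ 2 = 64 / ((k:ℝ)^2)^2 + 16 / (k:ℝ)^2 := by
      field_simp
      ring
    rw [key]
    have h1 : 64 / ((k:ℝ)^2)^2 ≤ 64 / (k:ℝ)^2 := by
      apply div_le_div_of_nonneg_left (by norm_num) hx2
      nlinarith [sq_nonneg ((k:ℝ)^2 - 1), hx2, hx]
    have h2 : (80:ℝ) * (1/(k:ℝ)^2) = 64/(k:ℝ)^2 + 16/(k:ℝ)^2 := by ring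
    rw [h2]
    linarith

/-- For every `T > 0` there exists `C = C(T) > 0` such that for every
`H¹(0,T)` function `q` with derivative `g`,
`sup_{t∈[0,T]} ∑_{k∈D} (1 + λ_k) |∫₀ᵗ q(s) e^{−iλ_k(t−s)} ds|²
  ≤ C (|q(0)|² + ‖q‖²_{L²(0,T)} + ‖g‖²_{L²(0,T)})`. -/
theorem stmt7 (T : ℝ) (hT : 0 < T) :
    ∃ C > (0:ℝ), ∀ q g : ℝ → ℂ, IsH1 T q g →
      ∀ t ∈ Icc (0:ℝ) T,
        Summable (fun k : {k : ℕ // Odd k} => (1 + lam k.1) *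
          ‖∫ s in (0:ℝ)..t, q s * Complex.exp (-Complex.I * (lam k.1 : ℂ) * ((t:ℂ) - (s:ℂ)))‖ ^ 2) ∧
        (∑' k : {k : ℕ // Odd k}, (1 + lam k.1) *
            ‖∫ s in (0:ℝ)..t, q s * Complex.exp (-Complex.I * (lam k.1 : ℂ) * ((t:ℂ) - (s:ℂ)))‖ ^ 2)
          ≤ C * (‖q 0‖ ^ 2 + (L2norm T q) ^ 2 + (L2norm T g) ^ 2) := by
  set S : ℝ := ∑' k : {k : ℕ // Odd k}, (1 + lam k.1) * (2 / lam k.1) ^ 2 with hS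
  have hS0 : 0 ≤ S := tsum_nonneg (fun k => by
    have : 0 ≤ lam k.1 := by unfold lam; positivity
    positivity)
  refine ⟨2 * S * (1 + T) + 1, by positivity, ?_⟩
  rintro q g ⟨hg2, hq⟩ t ht
  haveI : IsFiniteMeasure (volume.restrict (Ioc (0:ℝ) T)) := by
    constructor
    rw [Measure.restrict_apply_univ, Real.volume_Ioc]
    exact ENNReal.ofReal_lt_top
  have hgint : IntegrableOn g (Ioc (0:ℝ) T) := hg2.integrable one_le_two
  set G : ℝ := ∫ u in Ioc (0:ℝ) T, ‖g u‖ with hG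
  have hG0 : 0 ≤ G := integral_nonneg (fun u => norm_nonneg _)
  set M : ℝ := ‖q 0‖ + G with hM
  have hM0 : 0 ≤ M := add_nonneg (norm_nonneg _) hG0
  have hlam_pos : ∀ k : {k : ℕ // Odd k}, 0 < lam k.1 := by
    rintro ⟨k, hk⟩
    have hk1 : 1 ≤ k := Nat.one_le_iff_ne_zero.mpr (by rintro rfl; exact (Nat.not_odd_iff_even.mpr Even.zero) hk)
    have hx : (1:ℝ) ≤ (k:ℝ) := by exact_mod_cast hk1
    unfold lam
    nlinarith
  -- termwise bound
  have hterm : ∀ k : {k : ℕ // Odd k}, (1 + lam k.1) *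
      ‖∫ s in (0:ℝ)..t, q s * Complex.exp (-Complex.I * (lam k.1 : ℂ) * ((t:ℂ) - (s:ℂ)))‖ ^ 2
      ≤ ((1 + lam k.1) * (2 / lam k.1) ^ 2) * M ^ 2 := by
    intro k
    have hl := hlam_pos k
    have hb := key_bound hgint hq ht hl
    have hsq : ‖∫ s in (0:ℝ)..t, q s * Complex.exp (-Complex.I * (lam k.1 : ℂ) * ((t:ℂ) - (s:ℂ)))‖ ^ 2
        ≤ ((2 / lam k.1) * M) ^ 2 := by
      apply pow_le_pow_left₀ (norm_nonneg _)
      exact hb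
    have h1pl : (0:ℝ) ≤ 1 + lam k.1 := by positivity
    calc (1 + lam k.1) * ‖_‖ ^ 2 ≤ (1 + lam k.1) * ((2 / lam k.1) * M) ^ 2 :=
          mul_le_mul_of_nonneg_left hsq h1pl
    _ = ((1 + lam k.1) * (2 / lam k.1) ^ 2) * M ^ 2 := by ring
  have hnonneg : ∀ k : {k : ℕ // Odd k}, 0 ≤ (1 + lam k.1) *
      ‖∫ s in (0:ℝ)..t, q s * Complex.exp (-Complex.I * (lam k.1 : ℂ) * ((t:ℂ) - (s:ℂ)))‖ ^ 2 := by
    intro k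
    have := (hlam_pos k).le
    positivity
  have hsummajor : Summable (fun k : {k : ℕ // Odd k} =>
      ((1 + lam k.1) * (2 / lam k.1) ^ 2) * M ^ 2) := sum_c.mul_right _
  have hsummable : Summable (fun k : {k : ℕ // Odd k} => (1 + lam k.1) *
      ‖∫ s in (0:ℝ)..t, q s * Complex.exp (-Complex.I * (lam k.1 : ℂ) * ((t:ℂ) - (s:ℂ)))‖ ^ 2) :=
    Summable.of_nonneg_of_le hnonneg hterm hsummajor
  refine ⟨hsummable, ?_⟩
  have htsum : (∑' k : {k : ℕ // Odd k}, (1 + lam k.1) *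
      ‖∫ s in (0:ℝ)..t, q s * Complex.exp (-Complex.I * (lam k.1 : ℂ) * ((t:ℂ) - (s:ℂ)))‖ ^ 2)
      ≤ S * M ^ 2 := by
    calc (∑' k : {k : ℕ // Odd k}, _) ≤ ∑' k : {k : ℕ // Odd k},
          ((1 + lam k.1) * (2 / lam k.1) ^ 2) * M ^ 2 := Summable.tsum_le_tsum hterm hsummable hsummajor
    _ = S * M ^ 2 := by rw [tsum_mul_right]
  refine htsum.trans ?_
  -- final arithmetic
  have hGle : G ≤ Real.sqrt T * L2norm T g := l1_le_sqrt_l2 hT hg2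
  have hB0 : 0 ≤ L2norm T g := ENNReal.toReal_nonneg
  have hBq0 : (0:ℝ) ≤ (L2norm T q) ^ 2 := sq_nonneg _
  have hG2 : G ^ 2 ≤ T * (L2norm T g) ^ 2 := by
    have h1 : G ^ 2 ≤ (Real.sqrt T * L2norm T g) ^ 2 := pow_le_pow_left₀ hG0 hGle 2
    have h2 : (Real.sqrt T * L2norm T g) ^ 2 = T * (L2norm T g) ^ 2 := by
      rw [mul_pow, Real.sq_sqrt hT.le]
    linarith
  have hM2 : M ^ 2 ≤ 2 * ‖q 0‖ ^ 2 + 2 * G ^ 2 := by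
    rw [hM]
    nlinarith [sq_nonneg (‖q 0‖ - G)]
  have ha0 : (0:ℝ) ≤ ‖q 0‖ ^ 2 := sq_nonneg _
  nlinarith [mul_le_mul_of_nonneg_left hM2 hS0, mul_le_mul_of_nonneg_left hG2 hS0,
    mul_nonneg hS0 hBq0, mul_nonneg hS0 ha0, mul_nonneg (mul_nonneg hS0 hT.le) ha0,
    mul_nonneg hS0 (sq_nonneg (L2norm T g))]
end
end

section
/- For every a ∈ ℝ and every λ ∈ ℂ with Im λ ≠ 0, one has 1 + a · G₀^λ(0,0) ≠ 0, where G₀^λ(0,0) = (1/π) Σ_{k∈D} 1/(λ_k + λ) (the series converges absolutely since λ_k + λ ≠ 0 for all k). -/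
open MeasureTheory Set Filter
open scoped Real Topology ENNReal

noncomputable section

/-- For every `a ∈ ℝ` and every `λ ∈ ℂ` with `Im λ ≠ 0`, one has
`1 + a·G₀^λ(0,0) ≠ 0`, where `G₀^λ(0,0) = (1/π) ∑_{k∈D} 1/(λ_k + λ)`. -/
theorem stmt8 (a : ℝ) (lamC : ℂ) (hlam : lamC.im ≠ 0) :
    (1 : ℂ) + (a : ℂ) *
      ((1 / (π : ℂ)) * ∑' k : {k : ℕ // Odd k}, 1 / ((lam k.1 : ℂ) + lamC)) ≠ 0 := by
  by_cases ha : a = 0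
  · simp [ha]
  by_cases hsum : Summable (fun k : {k : ℕ // Odd k} => 1 / ((lam k.1 : ℂ) + lamC))
  · haveI : Nonempty {k : ℕ // Odd k} := ⟨⟨1, odd_one⟩⟩
    have hw : ∀ k : {k : ℕ // Odd k}, ((lam k.1 : ℂ) + lamC) ≠ 0 := by
      intro k h
      apply hlam
      have := congrArg Complex.im h
      simpa using this
    have him : (fun k : {k : ℕ // Odd k} => (1 / ((lam k.1 : ℂ) + lamC)).im)
        = fun k => -lamC.im * (1 / Complex.normSq ((lam k.1 : ℂ) + lamC)) := by
      funext k
      rw [one_div, Complex.inv_im]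
      simp [Complex.add_im]
      ring
    have hsum_im : Summable (fun k : {k : ℕ // Odd k} =>
        (-lamC.im) * (1 / Complex.normSq ((lam k.1 : ℂ) + lamC))) := by
      rw [← him]
      exact hsum.map (AddMonoidHom.mk' Complex.im (by intro x y; simp)) Complex.continuous_im
    have hsum_g : Summable (fun k : {k : ℕ // Odd k} =>
        1 / Complex.normSq ((lam k.1 : ℂ) + lamC)) := by
      have hne : (-lamC.im) ≠ 0 := neg_ne_zero.mpr hlam
      exact (summable_mul_left_iff hne).mp hsum_im
    have hg_pos : ∀ k : {k : ℕ // Odd k},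
        0 < 1 / Complex.normSq ((lam k.1 : ℂ) + lamC) := by
      intro k
      exact div_pos one_pos (Complex.normSq_pos.mpr (hw k))
    have htpos : 0 < ∑' k : {k : ℕ // Odd k}, 1 / Complex.normSq ((lam k.1 : ℂ) + lamC) := by
      exact Summable.tsum_pos hsum_g (fun k => (hg_pos k).le) ⟨1, odd_one⟩ (hg_pos ⟨1, odd_one⟩)
    have hSim : (∑' k : {k : ℕ // Odd k}, 1 / ((lam k.1 : ℂ) + lamC)).im
        = -lamC.im * ∑' k : {k : ℕ // Odd k}, 1 / Complex.normSq ((lam k.1 : ℂ) + lamC) := by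
      rw [← Complex.imCLM_apply, ContinuousLinearMap.map_tsum _ hsum]
      simp only [Complex.imCLM_apply]
      rw [him, tsum_mul_left]
    have hSim_ne : (∑' k : {k : ℕ // Odd k}, 1 / ((lam k.1 : ℂ) + lamC)).im ≠ 0 := by
      rw [hSim]
      exact mul_ne_zero (neg_ne_zero.mpr hlam) (ne_of_gt htpos)
    intro h
    have h2 := congrArg Complex.im h
    have hpi : (π : ℝ) ≠ 0 := Real.pi_ne_zero
    simp [Complex.add_im, Complex.mul_im, Complex.div_im, Complex.ofReal_im] at h2
    rcases h2 with h2 | h2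
    · exact ha h2
    · simp only [one_div] at hSim_ne; exact hSim_ne h2
  · rw [tsum_eq_zero_of_not_summable hsum]
    simp
end
end

section
/- Let T ≥ 8π and let (c_k)_{k∈D} be complex numbers with Σ_{k∈D} k⁴ |c_k|² < ∞. Then there exists a continuous function ρ : [0,T] → ℂ with ρ(0) = ρ(T) = 0 which is an H¹(0,T) function (i.e. ρ(t) = ∫₀^t g(s) ds for some g ∈ L²((0,T),ℂ)) and satisfies c_k = (i/√π) ∫₀^T ρ(s) e^{−iλ_k(T−s)} ds for all k ∈ D. -/
open MeasureTheory Set Filter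
open scoped Real Topology ENNReal ComplexConjugate

noncomputable section

namespace Stmt15

/-- The support length `8π`. -/
def P : ℝ := 8 * π

lemma P_pos : 0 < P := by unfold P; positivity

/-- `en n s = exp(I n s / 4)`. -/
def en (n : ℤ) (s : ℝ) : ℂ := Complex.exp (Complex.I * n / 4 * s)

lemma en_zero (s : ℝ) : en 0 s = 1 := by simp [en]

lemma en_apply_zero (n : ℤ) : en n 0 = 1 := by simp [en]

lemma en_norm (n : ℤ) (s : ℝ) : ‖en n s‖ = 1 := by
  rw [en, Complex.norm_exp]
  have : (Complex.I * n / 4 * s).re = 0 := by simp [Complex.mul_re, Complex.div_re]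
  rw [this, Real.exp_zero]

lemma en_mul (m n : ℤ) (s : ℝ) : en m s * en n s = en (m + n) s := by
  rw [en, en, en, ← Complex.exp_add]
  push_cast; ring

lemma conj_en (n : ℤ) (s : ℝ) : conj (en n s) = en (-n) s := by
  rw [en, en, ← Complex.exp_conj]
  have : conj (Complex.I * n / 4 * s) = Complex.I * (-n : ℤ) / 4 * s := by
    simp [Complex.conj_I, map_ofNat]
  rw [this]

lemma en_continuous (n : ℤ) : Continuous (en n) := by
  unfold en; fun_prop

lemma en_P (n : ℤ) : en n P = 1 := by
  rw [en, P]
  have : Complex.I * n / 4 * (8 * π : ℝ) = n * (2 * π * Complex.I) := by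
    push_cast; ring
  rw [this, Complex.exp_int_mul_two_pi_mul_I]

lemma integral_en (n : ℤ) (hn : n ≠ 0) (t : ℝ) :
    ∫ s in (0:ℝ)..t, en n s = (en n t - 1) / (Complex.I * n / 4) := by
  have hc : Complex.I * n / 4 ≠ 0 := by
    simp [Complex.I_ne_zero, hn]
  simpa [en] using integral_exp_mul_complex (a := 0) (b := t) hc

lemma integral_en_P (n : ℤ) (hn : n ≠ 0) : ∫ s in (0:ℝ)..P, en n s = 0 := by
  rw [integral_en n hn, en_P, sub_self, zero_div]

lemma integral_en_zero (t : ℝ) : ∫ s in (0:ℝ)..t, en 0 s = t := by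
  simp [en_zero]


section L2

variable (T : ℝ)

/-- the measure `volume` restricted to `(0,T]`. -/
def mu (T : ℝ) : Measure ℝ := volume.restrict (Ioc 0 T)

instance : IsFiniteMeasure (mu T) := by
  unfold mu; infer_instance

/-- indicator of `(0,P]` times `en n`. -/
def eni (n : ℤ) : ℝ → ℂ := (Ioc (0:ℝ) P).indicator (en n)

lemma eni_aestronglyMeasurable (n : ℤ) {μ : Measure ℝ} : AEStronglyMeasurable (eni n) μ :=
  ((en_continuous n).stronglyMeasurable.indicator measurableSet_Ioc).aestronglyMeasurable

lemma eni_norm_le (n : ℤ) (s : ℝ) : ‖eni n s‖ ≤ 1 := by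
  unfold eni
  by_cases h : s ∈ Ioc (0:ℝ) P
  · rw [indicator_of_mem h]; exact (en_norm n s).le
  · rw [indicator_of_notMem h]; simp

lemma memLp_eni (n : ℤ) : MemLp (eni n) 2 (mu T) :=
  MemLp.of_bound (eni_aestronglyMeasurable n) 1 (Eventually.of_forall (eni_norm_le n))

/-- the Lp element. -/
def E (n : ℤ) : Lp ℂ 2 (mu T) := (memLp_eni T n).toLp _

lemma E_coe (n : ℤ) : (E T n : ℝ → ℂ) =ᵐ[mu T] eni n := (memLp_eni T n).coeFn_toLp

lemma integral_Ioc_P_en {T : ℝ} (hT : P ≤ T) (n : ℤ) :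
    ∫ s, (Ioc (0:ℝ) P).indicator (en n) s ∂(mu T) = if n = 0 then (8*π:ℂ) else 0 := by
  rw [integral_indicator measurableSet_Ioc, mu, Measure.restrict_restrict measurableSet_Ioc,
    inter_eq_left.mpr (Ioc_subset_Ioc le_rfl hT),
    ← intervalIntegral.integral_of_le P_pos.le]
  by_cases hn : n = 0
  · simp [hn, integral_en_zero, P]
  · simp [hn, integral_en_P n hn]

lemma inner_E {T : ℝ} (hT : P ≤ T) (m n : ℤ) :
    (inner ℂ (E T m) (E T n) : ℂ) = if m = n then (8*π:ℂ) else 0 := by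
  rw [MeasureTheory.L2.inner_def]
  have h1 : ∀ᵐ s ∂(mu T), (inner ℂ ((E T m : ℝ → ℂ) s) ((E T n : ℝ → ℂ) s) : ℂ)
      = (Ioc (0:ℝ) P).indicator (en (n - m)) s := by
    filter_upwards [E_coe T m, E_coe T n] with s h h'
    rw [h, h', RCLike.inner_apply, eni, eni]
    by_cases hs : s ∈ Ioc (0:ℝ) P
    · rw [indicator_of_mem hs, indicator_of_mem hs, indicator_of_mem hs, conj_en, en_mul]
      congr 1
    · simp [indicator_of_notMem hs]
  rw [integral_congr_ae h1, integral_Ioc_P_en hT]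
  simp only [sub_eq_zero]
  congr 1
  simp [eq_comm]

lemma norm_E {T : ℝ} (hT : P ≤ T) (n : ℤ) : ‖E T n‖ = Real.sqrt (8*π) := by
  have h : ‖E T n‖ ^ 2 = 8*π := by
    have := norm_sq_eq_re_inner (𝕜 := ℂ) (E T n)
    rw [this, inner_E hT n n, if_pos rfl]
    simp
  rw [← h, Real.sqrt_sq (norm_nonneg _)]

/-- odd index type -/
abbrev S := {k : ℕ // Odd k}

instance : Countable S := Subtype.countable

lemma S_pos (j : S) : 0 < j.1 := j.2.pos

/-- normalization constant -/
def al : ℝ := (Real.sqrt (8*π))⁻¹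

lemma al_pos : 0 < al := by
  unfold al
  positivity

/-- normalized basis vectors -/
def v (T : ℝ) (j : S) : Lp ℂ 2 (mu T) := (al : ℂ) • E T (-(j.1:ℤ)^2)

lemma sq_inj : Function.Injective (fun j : S => -((j.1:ℤ))^2) := by
  intro i j h
  simp only [neg_inj] at h
  have : (i.1:ℤ) = j.1 := by nlinarith [Int.natCast_nonneg i.1, Int.natCast_nonneg j.1]
  exact Subtype.ext (by exact_mod_cast this)

lemma orthonormal_v {T : ℝ} (hT : P ≤ T) : Orthonormal ℂ (v T) := by
  rw [orthonormal_iff_ite]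
  intro i j
  unfold v
  rw [inner_smul_left, inner_smul_right, inner_E hT]
  by_cases h : i = j
  · subst h
    rw [if_pos rfl, if_pos rfl, ← mul_assoc]
    have h1 : (conj (al:ℂ)) * al = ((al^2 : ℝ) : ℂ) := by
      rw [Complex.conj_ofReal]; push_cast; ring
    have h2 : (al^2 : ℝ) = (8*π)⁻¹ := by
      rw [al, ← Real.sqrt_inv, Real.sq_sqrt (by positivity)]
    rw [h1, h2]
    have h8 : ((8*π:ℝ) : ℂ) ≠ 0 := by
      norm_cast
      positivity
    push_cast at h8 ⊢
    field_simp
  · rw [if_neg h, if_neg (fun hc => h (sq_inj hc)), mul_zero, mul_zero]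

end L2

section Coeffs

variable (T : ℝ) (c : ℕ → ℂ)

/-- the coefficients `d_k`. -/
def dd (k : ℕ) : ℂ := -Complex.I * c k * Complex.exp (Complex.I * (lam k) * T) / (8 * Real.sqrt π)

lemma norm_dd (k : ℕ) : ‖dd T c k‖ = ‖c k‖ / (8 * Real.sqrt π) := by
  unfold dd
  rw [norm_div, norm_mul, norm_mul]
  have h1 : ‖Complex.exp (Complex.I * (lam k) * T)‖ = 1 := by
    rw [Complex.norm_exp]
    have : (Complex.I * (lam k) * T).re = 0 := by simp [Complex.mul_re]
    rw [this, Real.exp_zero]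
  have h2 : ‖(8 * Real.sqrt π : ℂ)‖ = 8 * Real.sqrt π := by
    norm_cast
    rw [Real.norm_eq_abs, abs_of_nonneg (by positivity)]
  simp [h1, h2, abs_of_nonneg (Real.sqrt_nonneg π)]

variable (hc : Summable (fun k : S => (k.1 : ℝ) ^ 4 * ‖c k.1‖ ^ 2))

include hc in
lemma summable_norm_c : Summable (fun j : S => ‖c j.1‖) := by
  have hs : Summable (fun j : S => ((j.1:ℝ)^4)⁻¹) := by
    have h : Summable (fun n : ℕ => ((n:ℝ)^4)⁻¹) := by
      simpa using (Real.summable_nat_rpow_inv (p := 4)).mpr (by norm_num)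
    exact h.subtype _
  apply Summable.of_nonneg_of_le (fun j => norm_nonneg _)
    (fun j => ?_) (((hc.add hs).mul_left (1/2)))
  have hj : (1:ℝ) ≤ (j.1:ℝ) := by exact_mod_cast S_pos j
  have hj0 : (0:ℝ) < (j.1:ℝ) := by linarith
  have key : ‖c j.1‖ = ((j.1:ℝ)^2 * ‖c j.1‖) * ((j.1:ℝ)^2)⁻¹ := by
    field_simp
  have h2 : ((j.1:ℝ)^2 * ‖c j.1‖) * ((j.1:ℝ)^2)⁻¹ ≤
      (((j.1:ℝ)^2 * ‖c j.1‖)^2 + (((j.1:ℝ)^2)⁻¹)^2) / 2 := by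
    nlinarith [sq_nonneg ((j.1:ℝ)^2 * ‖c j.1‖ - ((j.1:ℝ)^2)⁻¹)]
  have h3 : (((j.1:ℝ)^2 * ‖c j.1‖)^2 + (((j.1:ℝ)^2)⁻¹)^2) / 2
      = 1/2 * ((j.1:ℝ)^4 * ‖c j.1‖^2 + ((j.1:ℝ)^4)⁻¹) := by
    field_simp
  rw [h3] at h2
  exact le_trans (le_of_eq key) h2

include hc in
lemma summable_norm_dd : Summable (fun j : S => ‖dd T c j.1‖) := by
  simp only [norm_dd]
  exact (summable_norm_c c hc).div_const _

include hc in
lemma summable_sq : Summable (fun j : S => (j.1:ℝ)^4 * ‖dd T c j.1‖^2) := by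
  simp only [norm_dd, div_pow]
  simpa [mul_div_assoc] using (hc.div_const ((8 * Real.sqrt π)^2))

end Coeffs

section Series

variable (T : ℝ) (c : ℕ → ℂ)

/-- derivative multiplier of `en n` -/
def cns (n : ℤ) : ℂ := Complex.I * n / 4

lemma cns_ne_zero {n : ℤ} (hn : n ≠ 0) : cns n ≠ 0 := by
  unfold cns
  simp [Complex.I_ne_zero, hn]

lemma norm_cns (n : ℤ) : ‖cns n‖ = |(n:ℝ)| / 4 := by
  unfold cns
  rw [norm_div, norm_mul]
  simp [Complex.norm_intCast]

/-- the series terms as Lp elements -/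
def F (j : S) : Lp ℂ 2 (mu T) :=
  (dd T c j.1 * cns (-(j.1:ℤ)^2)) • E T (-(j.1:ℤ)^2) + (Complex.I * dd T c j.1) • E T (-4)

variable {T c} (hT : P ≤ T) (hc : Summable (fun k : S => (k.1 : ℝ) ^ 4 * ‖c k.1‖ ^ 2))

include hT hc in
lemma summable_F : Summable (F T c) := by
  have hv := orthonormal_v hT
  apply Summable.add
  · -- orthogonal part
    have hrw : ∀ j : S, (dd T c j.1 * cns (-(j.1:ℤ)^2)) • E T (-(j.1:ℤ)^2)
        = LinearIsometry.toSpanSingleton ℂ _ (hv.1 j) ((dd T c j.1 * cns (-(j.1:ℤ)^2)) * (al:ℂ)⁻¹) := by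
      intro j
      rw [LinearIsometry.toSpanSingleton_apply, v, smul_smul, mul_assoc,
        inv_mul_cancel₀, mul_one]
      exact_mod_cast Complex.ofReal_ne_zero.mpr (ne_of_gt al_pos)
    rw [funext hrw]
    rw [hv.orthogonalFamily.summable_iff_norm_sq_summable]
    have hb : ∀ j : S, ‖dd T c j.1 * cns (-(j.1:ℤ)^2) * (al:ℂ)⁻¹‖^2
        = (8*π/16) * ((j.1:ℝ)^4 * ‖dd T c j.1‖^2) := by
      intro j
      rw [norm_mul, norm_mul, norm_cns]
      have h1 : |((-(j.1:ℤ)^2 : ℤ) : ℝ)| = (j.1:ℝ)^2 := by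
        push_cast
        rw [abs_neg, abs_of_nonneg (by positivity)]
      have h2 : ‖((al:ℂ))⁻¹‖ = Real.sqrt (8*π) := by
        rw [norm_inv, Complex.norm_real, Real.norm_eq_abs, abs_of_pos al_pos, al, inv_inv]
      rw [h1, h2]
      have h3 : Real.sqrt (8*π) ^ 2 = 8*π := Real.sq_sqrt (by positivity)
      rw [mul_pow, mul_pow, h3, div_pow]
      ring
    rw [funext hb]
    exact (summable_sq T c hc).mul_left _
  · -- absolutely convergent part
    apply Summable.of_norm
    have : ∀ j : S, ‖(Complex.I * dd T c j.1) • E T (-4)‖ = ‖dd T c j.1‖ * Real.sqrt (8*π) := by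
      intro j
      rw [norm_smul, norm_E hT, norm_mul]
      simp
    rw [funext this]
    exact (summable_norm_dd T c hc).mul_right _

end Series

/-- the H¹ derivative as an Lp element -/
def G (T : ℝ) (c : ℕ → ℂ) : Lp ℂ 2 (mu T) := ∑' j : S, F T c j

section Ind

variable (T : ℝ)

/-- indicator of `(0,t]`. -/
def indFun (t : ℝ) : ℝ → ℂ := (Ioc (0:ℝ) t).indicator (fun _ => 1)

lemma memLp_indFun (t : ℝ) : MemLp (indFun t) 2 (mu T) := by
  apply MemLp.of_bound
    ((stronglyMeasurable_const.indicator measurableSet_Ioc).aestronglyMeasurable) 1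
  apply Eventually.of_forall
  intro s
  by_cases h : s ∈ Ioc (0:ℝ) t
  · rw [indicator_of_mem h]; simp
  · rw [indicator_of_notMem h]; simp

/-- indicator as Lp element -/
def ind (t : ℝ) : Lp ℂ 2 (mu T) := (memLp_indFun T t).toLp _

lemma ind_coe (t : ℝ) : (ind T t : ℝ → ℂ) =ᵐ[mu T] indFun t := (memLp_indFun T t).coeFn_toLp

lemma inner_ind_Lp {t T : ℝ} (ht : 0 ≤ t) (htT : t ≤ T) (X : Lp ℂ 2 (mu T)) :
    (inner ℂ (ind T t) X : ℂ) = ∫ s in (0:ℝ)..t, (X : ℝ → ℂ) s := by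
  rw [MeasureTheory.L2.inner_def]
  have h1 : ∀ᵐ s ∂(mu T), (inner ℂ ((ind T t : ℝ → ℂ) s) ((X : ℝ → ℂ) s) : ℂ)
      = (Ioc (0:ℝ) t).indicator (fun s => (X : ℝ → ℂ) s) s := by
    filter_upwards [ind_coe T t] with s h
    rw [h, RCLike.inner_apply, indFun]
    by_cases hs : s ∈ Ioc (0:ℝ) t
    · rw [indicator_of_mem hs, indicator_of_mem hs]
      simp
    · simp [indicator_of_notMem hs]
  rw [integral_congr_ae h1, integral_indicator measurableSet_Ioc]
  unfold mu
  rw [Measure.restrict_restrict measurableSet_Ioc,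
    inter_eq_left.mpr (Ioc_subset_Ioc le_rfl htT),
    ← intervalIntegral.integral_of_le ht]

/-- the basic building-block integrals -/
def Jn (n : ℤ) (t : ℝ) : ℂ := ∫ s in (0:ℝ)..(min t P), en n s

lemma inner_ind_E {t T : ℝ} (ht : 0 ≤ t) (htT : t ≤ T) (n : ℤ) :
    (inner ℂ (ind T t) (E T n) : ℂ) = Jn n t := by
  rw [MeasureTheory.L2.inner_def]
  have h1 : ∀ᵐ s ∂(mu T), (inner ℂ ((ind T t : ℝ → ℂ) s) ((E T n : ℝ → ℂ) s) : ℂ)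
      = (Ioc (0:ℝ) (min t P)).indicator (en n) s := by
    filter_upwards [ind_coe T t, E_coe T n] with s h h'
    rw [h, h', RCLike.inner_apply, indFun, eni]
    have hI : Ioc (0:ℝ) t ∩ Ioc (0:ℝ) P = Ioc (0:ℝ) (min t P) := by
      rw [Ioc_inter_Ioc, max_self]
    by_cases hs : s ∈ Ioc (0:ℝ) (min t P)
    · have hs2 : s ∈ Ioc (0:ℝ) t ∩ Ioc (0:ℝ) P := by rw [hI]; exact hs
      rw [indicator_of_mem hs2.1, indicator_of_mem hs2.2, indicator_of_mem hs]
      simp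
    · rw [indicator_of_notMem hs]
      have hs2 : s ∉ Ioc (0:ℝ) t ∩ Ioc (0:ℝ) P := by rw [hI]; exact hs
      rcases not_and_or.mp (fun hh => hs2 (mem_inter hh.1 hh.2)) with h2 | h2
      · rw [indicator_of_notMem h2]; simp
      · rw [indicator_of_notMem h2]; simp
  rw [integral_congr_ae h1, integral_indicator measurableSet_Ioc]
  unfold mu
  rw [Measure.restrict_restrict measurableSet_Ioc,
    inter_eq_left.mpr (Ioc_subset_Ioc le_rfl (le_trans (min_le_left t P) htT)),
    ← intervalIntegral.integral_of_le (le_min ht P_pos.le)]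
  rfl

end Ind

section Rho

variable (T : ℝ) (c : ℕ → ℂ)

/-- the derivative function `g`. -/
def gfun : ℝ → ℂ := (G T c : ℝ → ℂ)

/-- the function `ρ`. -/
def rho : ℝ → ℂ := fun t => ∫ s in (0:ℝ)..t, gfun T c s

lemma memLp_gfun : MemLp (gfun T c) 2 (mu T) := Lp.memLp _

variable {T c} (hT : P ≤ T) (hc : Summable (fun k : S => (k.1 : ℝ) ^ 4 * ‖c k.1‖ ^ 2))

include hT hc in
lemma rho_inner {t : ℝ} (ht : t ∈ Icc (0:ℝ) T) :
    rho T c t = ∑' j : S, (dd T c j.1 * cns (-(j.1:ℤ)^2) * Jn (-(j.1:ℤ)^2) t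
      + Complex.I * dd T c j.1 * Jn (-4) t) := by
  have h1 : rho T c t = inner ℂ (ind T t) (G T c) := by
    rw [rho, inner_ind_Lp ht.1 ht.2]
    rfl
  rw [h1, G]
  have h2 := (innerSL ℂ (ind T t)).map_tsum (summable_F hT hc)
  simp only [innerSL_apply_apply] at h2
  rw [h2]
  congr 1
  funext j
  rw [F, inner_add_right, inner_smul_right, inner_smul_right,
    inner_ind_E ht.1 ht.2, inner_ind_E ht.1 ht.2]

include hT hc in
lemma rho_eq_phi {t : ℝ} (ht : t ∈ Icc (0:ℝ) P) :
    rho T c t = ∑' j : S, dd T c j.1 * (en (-(j.1:ℤ)^2) t - en (-4) t) := by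
  rw [rho_inner hT hc ⟨ht.1, le_trans ht.2 hT⟩]
  congr 1
  funext j
  have hmin : min t P = t := min_eq_left ht.2
  have hj2 : (-(j.1:ℤ)^2 : ℤ) ≠ 0 := by
    have := S_pos j
    simp only [neg_ne_zero]
    positivity
  have h4 : (-4 : ℤ) ≠ 0 := by norm_num
  rw [Jn, Jn, hmin, integral_en _ hj2, integral_en _ h4]
  have hcns1 : Complex.I * ((-(j.1:ℤ)^2 : ℤ) : ℂ) / 4 = cns (-(j.1:ℤ)^2) := rfl
  have hI4 : Complex.I * ((-4:ℤ) : ℂ) / 4 = -Complex.I := by push_cast; ring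
  rw [hcns1, hI4]
  have e1 : dd T c j.1 * cns (-(j.1:ℤ)^2) * ((en (-(j.1:ℤ)^2) t - 1) / cns (-(j.1:ℤ)^2))
      = dd T c j.1 * (en (-(j.1:ℤ)^2) t - 1) := by
    have hu := cns_ne_zero hj2
    field_simp
  have e2 : Complex.I * dd T c j.1 * ((en (-4) t - 1) / (-Complex.I))
      = -(dd T c j.1 * (en (-4) t - 1)) := by
    rw [div_neg, div_eq_mul_inv, Complex.inv_I]
    ring_nf
    rw [Complex.I_sq]
    ring
  rw [e1, e2]
  ring

include hT hc in
lemma rho_eq_zero {t : ℝ} (ht : t ∈ Icc P T) : rho T c t = 0 := by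
  rw [rho_inner hT hc ⟨le_trans P_pos.le ht.1, ht.2⟩]
  have hmin : min t P = P := min_eq_right ht.1
  convert tsum_zero with j
  have hj2 : (-(j.1:ℤ)^2 : ℤ) ≠ 0 := by
    have := S_pos j
    simp only [neg_ne_zero]
    positivity
  rw [Jn, Jn, hmin, integral_en_P _ hj2, integral_en_P _ (by norm_num)]
  ring

include hT in
lemma rho_continuousOn : ContinuousOn (rho T c) (Icc (0:ℝ) T) := by
  have hint : IntegrableOn (gfun T c) (Icc (0:ℝ) T) volume := by
    have h1 : Integrable (gfun T c) (mu T) := (memLp_gfun T c).integrable one_le_two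
    have h2 : IntegrableOn (gfun T c) (Ioc (0:ℝ) T) volume := h1
    exact h2.congr_set_ae Ioc_ae_eq_Icc.symm
  have h3 := intervalIntegral.continuousOn_primitive (f := gfun T c) (a := 0) (b := T)
    (μ := volume) hint
  apply h3.congr
  intro x hx
  rw [rho, intervalIntegral.integral_of_le hx.1]

lemma sq_ne_four {k : ℕ} (hk : Odd k) : ((k:ℤ))^2 - 4 ≠ 0 := by
  intro h
  have h1 : ((k:ℤ))^2 = 4 := by linarith
  have h2 : (k:ℤ)^2 = ((k^2 : ℕ) : ℤ) := by push_cast; ring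
  rw [h2] at h1
  have h3 : k^2 = 4 := by exact_mod_cast h1
  have h4 : k = 2 := by nlinarith [sq_nonneg (k - 2), sq_nonneg (k + 2)]
  rw [h4] at hk
  exact (Nat.not_odd_iff_even.mpr (by norm_num)) hk

set_option maxHeartbeats 2000000 in
include hT hc in
lemma moment (k : ℕ) (hk : Odd k) :
    ∫ s in (0:ℝ)..T, rho T c s * Complex.exp (-Complex.I * ((lam k : ℝ) : ℂ) * ((T : ℂ) - (s : ℂ)))
      = 8 * π * dd T c k * Complex.exp (-Complex.I * ((lam k : ℝ) : ℂ) * T) := by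
  set w : ℝ → ℂ := fun s => Complex.exp (-Complex.I * ((lam k : ℝ) : ℂ) * ((T : ℂ) - (s : ℂ)))
    with hw
  set C : ℂ := Complex.exp (-Complex.I * ((lam k : ℝ) : ℂ) * T) with hC
  have hwc : Continuous w := by
    rw [hw]
    exact Complex.continuous_exp.comp
      (continuous_const.mul (continuous_const.sub Complex.continuous_ofReal))
  have hwen : ∀ s : ℝ, w s = C * en ((k:ℤ)^2) s := by
    intro s
    have harg : -Complex.I * ((lam k : ℝ) : ℂ) * ((T : ℂ) - (s : ℂ))
        = -Complex.I * ((lam k : ℝ) : ℂ) * T + Complex.I * (((k:ℤ)^2 : ℤ) : ℂ) / 4 * s := by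
      have h : ((lam k : ℝ) : ℂ) = (k:ℂ)^2/4 := by unfold lam; push_cast; ring
      rw [h]; push_cast; ring
    rw [hw]
    simp only
    rw [harg, Complex.exp_add, hC, en]
  -- integrability of the pieces
  have hrhoc := rho_continuousOn hT (c := c)
  have hcont : ContinuousOn (fun s => rho T c s * w s) (Icc (0:ℝ) T) :=
    hrhoc.mul hwc.continuousOn
  have hPT : P ≤ T := hT
  have hi1 : IntervalIntegrable (fun s => rho T c s * w s) volume 0 P := by
    apply ContinuousOn.intervalIntegrable
    apply hcont.mono
    rw [uIcc_of_le P_pos.le]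
    exact Icc_subset_Icc le_rfl hPT
  have hi2 : IntervalIntegrable (fun s => rho T c s * w s) volume P T := by
    apply ContinuousOn.intervalIntegrable
    apply hcont.mono
    rw [uIcc_of_le hPT]
    exact Icc_subset_Icc P_pos.le le_rfl
  have hsplit := intervalIntegral.integral_add_adjacent_intervals hi1 hi2
  rw [← hsplit]
  -- second piece is zero
  have hzero : ∫ s in P..T, rho T c s * w s = 0 := by
    have : EqOn (fun s => rho T c s * w s) (fun _ => 0) (uIcc P T) := by
      intro s hs
      rw [uIcc_of_le hPT] at hs
      simp only
      rw [rho_eq_zero hT hc hs, zero_mul]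
    rw [intervalIntegral.integral_congr this]
    simp
  rw [hzero, add_zero]
  -- first piece
  set f : S → ℝ → ℂ := fun j s => dd T c j.1 * (en (-(j.1:ℤ)^2 + (k:ℤ)^2) s - en (-4 + (k:ℤ)^2) s)
    with hf
  have heq : EqOn (fun s => rho T c s * w s) (fun s => C * ∑' j : S, f j s) (uIcc 0 P) := by
    intro s hs
    rw [uIcc_of_le P_pos.le] at hs
    simp only
    rw [rho_eq_phi hT hc hs, hwen s, ← tsum_mul_right, ← tsum_mul_left]
    apply tsum_congr
    intro j
    rw [hf]
    simp only
    have hmm : (en (-(j.1:ℤ)^2 + (k:ℤ)^2) s - en (-4 + (k:ℤ)^2) s)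
        = (en (-(j.1:ℤ)^2) s - en (-4) s) * en ((k:ℤ)^2) s := by
      rw [sub_mul, en_mul, en_mul]
    rw [hmm]
    ring
  rw [intervalIntegral.integral_congr heq, intervalIntegral.integral_const_mul,
    intervalIntegral.integral_of_le P_pos.le]
  -- swap integral and tsum
  have hmeas : ∀ j : S, AEStronglyMeasurable (f j) (volume.restrict (Ioc 0 P)) := by
    intro j
    apply Continuous.aestronglyMeasurable
    rw [hf]
    exact continuous_const.mul ((en_continuous _).sub (en_continuous _))
  have hbound : ∀ (j : S) (s : ℝ), ‖f j s‖ ≤ 2 * ‖dd T c j.1‖ := by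
    intro j s
    rw [hf]
    simp only
    rw [norm_mul]
    have : ‖en (-(j.1:ℤ)^2 + (k:ℤ)^2) s - en (-4 + (k:ℤ)^2) s‖ ≤ 2 := by
      calc ‖en (-(j.1:ℤ)^2 + (k:ℤ)^2) s - en (-4 + (k:ℤ)^2) s‖
          ≤ ‖en (-(j.1:ℤ)^2 + (k:ℤ)^2) s‖ + ‖en (-4 + (k:ℤ)^2) s‖ := norm_sub_le _ _
        _ = 2 := by rw [en_norm, en_norm]; norm_num
    calc ‖dd T c j.1‖ * ‖en (-(j.1:ℤ)^2 + (k:ℤ)^2) s - en (-4 + (k:ℤ)^2) s‖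
        ≤ ‖dd T c j.1‖ * 2 := by
          exact mul_le_mul_of_nonneg_left this (norm_nonneg _)
      _ = 2 * ‖dd T c j.1‖ := by ring
  have hlint : ∑' j : S, ∫⁻ s, ‖f j s‖₊ ∂(volume.restrict (Ioc 0 P)) ≠ ∞ := by
    have hle : ∀ j : S, ∫⁻ s, ‖f j s‖₊ ∂(volume.restrict (Ioc 0 P))
        ≤ ENNReal.ofReal (2 * ‖dd T c j.1‖ * P) := by
      intro j
      calc ∫⁻ s, ‖f j s‖₊ ∂(volume.restrict (Ioc 0 P))
          ≤ ∫⁻ _, ENNReal.ofReal (2 * ‖dd T c j.1‖) ∂(volume.restrict (Ioc 0 P)) := by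
            apply lintegral_mono
            intro s
            show (‖f j s‖₊ : ℝ≥0∞) ≤ ENNReal.ofReal (2 * ‖dd T c j.1‖)
            rw [← enorm_eq_nnnorm, ← ofReal_norm]
            exact ENNReal.ofReal_le_ofReal (hbound j s)
        _ = ENNReal.ofReal (2 * ‖dd T c j.1‖) * ENNReal.ofReal P := by
            rw [lintegral_const, Measure.restrict_apply_univ, Real.volume_Ioc, sub_zero]
        _ = ENNReal.ofReal (2 * ‖dd T c j.1‖ * P) := by
            rw [← ENNReal.ofReal_mul (by positivity : (0:ℝ) ≤ 2 * ‖dd T c j.1‖)]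
    have hsum : Summable (fun j : S => 2 * ‖dd T c j.1‖ * P) :=
      ((summable_norm_dd T c hc).mul_left 2).mul_right P
    have : ∑' j : S, ∫⁻ s, ‖f j s‖₊ ∂(volume.restrict (Ioc 0 P))
        ≤ ∑' j : S, ENNReal.ofReal (2 * ‖dd T c j.1‖ * P) := ENNReal.tsum_le_tsum hle
    have hne : ∑' j : S, ENNReal.ofReal (2 * ‖dd T c j.1‖ * P) ≠ ∞ := by
      rw [← ENNReal.ofReal_tsum_of_nonneg (fun j => mul_nonneg (by positivity) P_pos.le) hsum]
      exact ENNReal.ofReal_ne_top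
    exact ne_top_of_le_ne_top hne this
  have hswap : ∫ s in Ioc (0:ℝ) P, (∑' j : S, f j s) = ∑' j : S, ∫ s in Ioc (0:ℝ) P, f j s :=
    integral_tsum hmeas hlint
  rw [hswap]
  -- termwise evaluation
  have hterm : ∀ j : S, ∫ s in Ioc (0:ℝ) P, f j s
      = if j.1 = k then 8 * π * dd T c k else 0 := by
    intro j
    rw [hf]
    simp only
    rw [← intervalIntegral.integral_of_le P_pos.le, intervalIntegral.integral_const_mul,
      intervalIntegral.integral_sub
        (((en_continuous _).intervalIntegrable _ _))
        (((en_continuous _).intervalIntegrable _ _))]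
    have h4 : (-4 + (k:ℤ)^2) ≠ 0 := by
      have := sq_ne_four hk
      omega
    rw [integral_en_P _ h4]
    by_cases hjk : j.1 = k
    · have h0 : (-(j.1:ℤ)^2 + (k:ℤ)^2) = 0 := by
        rw [hjk]; ring
      rw [h0, integral_en_zero, if_pos hjk, hjk]
      rw [P]
      push_cast
      ring
    · have h0 : (-(j.1:ℤ)^2 + (k:ℤ)^2) ≠ 0 := by
        intro h
        apply hjk
        have : (j.1:ℤ)^2 = (k:ℤ)^2 := by linarith
        have := abs_eq_abs.mp (by
          rw [← sq_abs (j.1:ℤ), ← sq_abs (k:ℤ)] at this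
          nlinarith [abs_nonneg (j.1:ℤ), abs_nonneg (k:ℤ), sq_abs (j.1:ℤ), sq_abs (k:ℤ)] : |(j.1:ℤ)| = |(k:ℤ)|)
        omega
      rw [integral_en_P _ h0, if_neg hjk]
      simp
  rw [tsum_congr hterm, tsum_eq_single (⟨k, hk⟩ : S) (by
    intro j hj
    rw [if_neg]
    intro h
    exact hj (Subtype.ext h))]
  rw [if_pos rfl, hC]
  ring

end Rho

end Stmt15

open Stmt15 in
theorem stmt15_aux (T : ℝ) (hT : 8 * π ≤ T) (c : ℕ → ℂ)
    (hc : Summable (fun k : {k : ℕ // Odd k} => (k.1 : ℝ) ^ 4 * ‖c k.1‖ ^ 2)) :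
    ∃ ρ g : ℝ → ℂ,
      ContinuousOn ρ (Icc (0:ℝ) T) ∧
      ρ 0 = 0 ∧ ρ T = 0 ∧
      MemLp g 2 (volume.restrict (Ioc 0 T)) ∧
      (∀ t ∈ Icc (0:ℝ) T, ρ t = ∫ s in (0:ℝ)..t, g s) ∧
      ∀ k : ℕ, Odd k → c k = (Complex.I / ((Real.sqrt π : ℝ) : ℂ)) *
        ∫ s in (0:ℝ)..T, ρ s * Complex.exp (-Complex.I * (lam k : ℂ) * ((T : ℂ) - (s : ℂ))) := by
  have hPT : P ≤ T := hT
  refine ⟨rho T c, gfun T c, rho_continuousOn hPT, ?_, ?_, memLp_gfun T c, fun t _ => rfl, ?_⟩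
  · rw [rho, intervalIntegral.integral_same]
  · exact rho_eq_zero hPT hc ⟨hPT, le_rfl⟩
  · intro k hk
    rw [moment hPT hc k hk]
    rw [dd, show -Complex.I * ((lam k : ℝ):ℂ) * (T:ℂ) = -(Complex.I * ((lam k : ℝ):ℂ) * T)
      by ring, Complex.exp_neg]
    have hpi : ((Real.sqrt π : ℝ) : ℂ) * ((Real.sqrt π : ℝ) : ℂ) = (π : ℂ) := by
      norm_cast
      exact Real.mul_self_sqrt Real.pi_pos.le
    have hpi0 : ((Real.sqrt π : ℝ) : ℂ) ≠ 0 := by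
      rw [Complex.ofReal_ne_zero]
      positivity
    have hA : Complex.exp (Complex.I * ((lam k : ℝ):ℂ) * T) ≠ 0 := Complex.exp_ne_zero _
    have hI2 : Complex.I ^ 2 = -1 := Complex.I_sq
    field_simp
    linear_combination (c k) * hpi + (c k * (π:ℂ)) * hI2

/-- Let `T ≥ 8π` and `(c_k)_{k∈D}` with `∑_{k∈D} k⁴|c_k|² < ∞`. Then there is a
continuous `ρ : [0,T] → ℂ` with `ρ(0) = ρ(T) = 0`, which is an `H¹(0,T)` function
(`ρ(t) = ∫₀ᵗ g(s) ds` with `g ∈ L²((0,T),ℂ)`) and satisfies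
`c_k = (i/√π) ∫₀ᵀ ρ(s) e^{−iλ_k(T−s)} ds` for all `k ∈ D`. -/
theorem stmt15 (T : ℝ) (hT : 8 * π ≤ T) (c : ℕ → ℂ)
    (hc : Summable (fun k : {k : ℕ // Odd k} => (k.1 : ℝ) ^ 4 * ‖c k.1‖ ^ 2)) :
    ∃ ρ g : ℝ → ℂ,
      ContinuousOn ρ (Icc (0:ℝ) T) ∧
      ρ 0 = 0 ∧ ρ T = 0 ∧
      MemLp g 2 (volume.restrict (Ioc 0 T)) ∧
      (∀ t ∈ Icc (0:ℝ) T, ρ t = ∫ s in (0:ℝ)..t, g s) ∧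
      ∀ k : ℕ, Odd k → c k = (Complex.I / ((Real.sqrt π : ℝ) : ℂ)) *
        ∫ s in (0:ℝ)..T, ρ s * Complex.exp (-Complex.I * (lam k : ℂ) * ((T : ℂ) - (s : ℂ))) :=
  stmt15_aux T hT c hc
end
end

section
/- Let T > 0 and q ∈ L²((0,T),ℂ). For t ∈ [0,T] and k ∈ D set c_k(t) = ∫₀^t q(s) e^{−iλ_k(t−s)} ds. Then for each t the family (c_k(t))_{k∈D} is square-summable, and the map t ↦ (c_k(t))_{k∈D} is continuous from [0,T] into ℓ²(D). -/
open MeasureTheory Set Filter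
open scoped Real Topology ENNReal

noncomputable section

/-! ### Auxiliary material -/

def nkk (k : ℕ) : ℕ := (k / 2) * (k / 2 + 1)

lemma nkk_injOn {j k : ℕ} (hj : Odd j) (hk : Odd k) (h : nkk j = nkk k) : j = k := by
  obtain ⟨a, ha⟩ := hj
  obtain ⟨b, hb⟩ := hk
  have ha2 : j / 2 = a := by omega
  have hb2 : k / 2 = b := by omega
  unfold nkk at h
  rw [ha2, hb2] at h
  have hab : a = b := by
    rcases Nat.lt_trichotomy a b with hlt | heq | hgt
    · exfalso; have : a * (a + 1) < b * (b + 1) := by nlinarith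
      omega
    · exact heq
    · exfalso; have : b * (b + 1) < a * (a + 1) := by nlinarith
      omega
  omega

lemma nkk_inj : Function.Injective (fun k : {k : ℕ // Odd k} => nkk k.1) :=
  fun j k h => Subtype.ext (nkk_injOn j.2 k.2 h)

lemma lam_odd {k : ℕ} (hk : Odd k) : lam k = nkk k + 1 / 4 := by
  obtain ⟨m, hm⟩ := hk
  have h2 : k / 2 = m := by omega
  unfold lam nkk
  rw [h2]
  have : (k : ℝ) = 2 * m + 1 := by exact_mod_cast congrArg Nat.cast (by omega : k = 2 * m + 1)
  rw [this]
  push_cast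
  ring

def vfun (L : ℝ) (n : ℕ) : ℝ → ℂ :=
  fun u => (((Real.sqrt L)⁻¹ : ℝ) : ℂ) * Complex.exp (Complex.I * n * u)

lemma memℒp_vfun (L : ℝ) (n : ℕ) : MemLp (vfun L n) 2 (volume.restrict (Ioc (0:ℝ) L)) := by
  refine MemLp.of_bound (Continuous.aestronglyMeasurable ?_) ((Real.sqrt L)⁻¹)
    (ae_of_all _ fun u => ?_)
  · unfold vfun; fun_prop
  · show ‖vfun L n u‖ ≤ _
    rw [show vfun L n u = (((Real.sqrt L)⁻¹ : ℝ) : ℂ) * Complex.exp (Complex.I * ((n * u : ℝ) : ℂ)) by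
      rw [vfun]; push_cast; ring_nf]
    rw [norm_mul, norm_exp_I_mul_real, mul_one, Complex.norm_real, Real.norm_eq_abs]
    exact le_of_eq (abs_of_nonneg (inv_nonneg.mpr (Real.sqrt_nonneg L)))

def vLp (L : ℝ) (n : ℕ) : Lp ℂ 2 (volume.restrict (Ioc (0:ℝ) L)) :=
  (memℒp_vfun L n).toLp (vfun L n)

lemma inner_vLp (L : ℝ) (n : ℕ) (f : ℝ → ℂ) (hf : MemLp f 2 (volume.restrict (Ioc (0:ℝ) L))) :
    (inner ℂ (vLp L n) (hf.toLp f) : ℂ)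
      = (((Real.sqrt L)⁻¹ : ℝ) : ℂ) *
        ∫ u in Ioc (0:ℝ) L, Complex.exp (-(Complex.I * n * u)) * f u := by
  rw [MeasureTheory.L2.inner_def, ← MeasureTheory.integral_const_mul]
  refine integral_congr_ae ?_
  filter_upwards [(memℒp_vfun L n).coeFn_toLp, hf.coeFn_toLp] with u h1 h2
  rw [show (vLp L n : Lp ℂ 2 (volume.restrict (Ioc (0:ℝ) L)))
      = (memℒp_vfun L n).toLp (vfun L n) from rfl, h1, h2, RCLike.inner_apply, vfun]
  have hc : (starRingEnd ℂ) (Complex.I * n * u) = -(Complex.I * n * u) := by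
    simp [map_mul, Complex.conj_I, Complex.conj_ofReal]
  rw [map_mul, Complex.conj_ofReal, ← Complex.exp_conj, hc]
  ring

lemma orthonormal_vLp (M : ℕ) (hM : 0 < M) :
    Orthonormal ℂ (fun n : ℕ => vLp (2 * π * M) n) := by
  have hL : (0:ℝ) < 2 * π * M := by positivity
  set L : ℝ := 2 * π * M with hLdef
  rw [orthonormal_iff_ite]
  intro m n
  rw [show vLp L n = (memℒp_vfun L n).toLp (vfun L n) from rfl,
    inner_vLp L m (vfun L n) (memℒp_vfun L n)]
  have hpt : ∀ u : ℝ, Complex.exp (-(Complex.I * m * u)) * vfun L n u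
      = (((Real.sqrt L)⁻¹ : ℝ) : ℂ) * Complex.exp ((((n:ℂ) - m) * Complex.I) * u) := by
    intro u
    rw [vfun, mul_left_comm, ← Complex.exp_add]
    congr 2
    ring
  simp only [hpt]
  rw [MeasureTheory.integral_const_mul, ← intervalIntegral.integral_of_le hL.le]
  by_cases h : m = n
  · subst h
    rw [if_pos rfl]
    simp only [sub_self, zero_mul, Complex.exp_zero]
    rw [intervalIntegral.integral_const]
    have hval : ((Real.sqrt L)⁻¹ : ℝ) * ((Real.sqrt L)⁻¹ * ((L - 0) * 1)) = 1 := by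
      rw [← mul_assoc, ← mul_inv, Real.mul_self_sqrt hL.le]
      field_simp
      ring
    calc (((Real.sqrt L)⁻¹ : ℝ) : ℂ) * ((((Real.sqrt L)⁻¹ : ℝ) : ℂ) * ((L - 0) • (1:ℂ)))
        = ((((Real.sqrt L)⁻¹ : ℝ) * ((Real.sqrt L)⁻¹ * ((L - 0) * 1)) : ℝ) : ℂ) := by
          rw [Complex.real_smul]; push_cast; ring
      _ = 1 := by rw [hval]; norm_num
  · rw [if_neg h]
    have hc : ((n:ℂ) - m) * Complex.I ≠ 0 := by
      refine mul_ne_zero ?_ Complex.I_ne_zero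
      rw [sub_ne_zero]
      exact_mod_cast Ne.symm h
    rw [integral_exp_mul_complex hc]
    have h1 : Complex.exp (((n:ℂ) - m) * Complex.I * (L:ℝ)) = 1 := by
      have harg : ((n:ℂ) - m) * Complex.I * ((L:ℝ):ℂ)
          = ((((n:ℤ) - (m:ℤ)) * (M:ℤ) : ℤ) : ℂ) * (2 * (π:ℂ) * Complex.I) := by
        rw [hLdef]; push_cast; ring
      rw [harg, Complex.exp_int_mul_two_pi_mul_I]
    rw [h1]
    simp

lemma memℓp_inner {ι H : Type*} [NormedAddCommGroup H] [InnerProductSpace ℂ H]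
    {w : ι → H} (hw : Orthonormal ℂ w) (x : H) :
    Memℓp (fun i => (inner ℂ (w i) x : ℂ)) 2 := by
  apply memℓp_gen
  have h := Orthonormal.inner_products_summable x hw
  have hpow : ∀ a : ℝ, a ^ (2:ℝ≥0∞).toReal = a ^ (2:ℕ) := fun a => by
    rw [show ((2:ℝ≥0∞)).toReal = ((2:ℕ):ℝ) by norm_num, Real.rpow_natCast]
  simpa only [hpow] using h

def besselCLM {ι H : Type*} [NormedAddCommGroup H] [InnerProductSpace ℂ H]
    (w : ι → H) (hw : Orthonormal ℂ w) : H →L[ℂ] lp (fun _ : ι => ℂ) 2 :=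
  LinearMap.mkContinuous
    { toFun := fun x => ⟨fun i => (inner ℂ (w i) x : ℂ), memℓp_inner hw x⟩
      map_add' := fun x y => Subtype.ext (funext fun i => inner_add_right _ _ _)
      map_smul' := fun c x => Subtype.ext (funext fun i => inner_smul_right _ _ _) }
    1
    (fun x => by
      have hpow : ∀ a : ℝ, a ^ (2:ℝ≥0∞).toReal = a ^ (2:ℕ) := fun a => by
        rw [show ((2:ℝ≥0∞)).toReal = ((2:ℕ):ℝ) by norm_num, Real.rpow_natCast]
      rw [one_mul, lp.norm_eq_tsum_rpow (by norm_num : (0:ℝ) < (2:ℝ≥0∞).toReal)]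
      simp only [hpow]
      have hb : (∑' i, ‖(inner ℂ (w i) x : ℂ)‖ ^ (2:ℕ)) ≤ ‖x‖ ^ (2:ℕ) :=
        Orthonormal.tsum_inner_products_le x hw
      calc (∑' i, ‖(⟨fun i => (inner ℂ (w i) x : ℂ), memℓp_inner hw x⟩ :
              lp (fun _ : ι => ℂ) 2) i‖ ^ (2:ℕ)) ^ (1 / (2:ℝ≥0∞).toReal)
          ≤ (‖x‖ ^ (2:ℕ)) ^ (1 / (2:ℝ≥0∞).toReal) := by
            apply Real.rpow_le_rpow (tsum_nonneg fun i => by positivity) hb (by norm_num)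
        _ = ‖x‖ := by
            rw [show (1 / (2:ℝ≥0∞).toReal) = ((2:ℝ)⁻¹) by norm_num,
              ← Real.rpow_natCast ‖x‖ 2, ← Real.rpow_mul (norm_nonneg x)]
            norm_num)

lemma besselCLM_apply {ι H : Type*} [NormedAddCommGroup H] [InnerProductSpace ℂ H]
    (w : ι → H) (hw : Orthonormal ℂ w) (x : H) (i : ι) :
    (besselCLM w hw x : ∀ _ : ι, ℂ) i = (inner ℂ (w i) x : ℂ) := rfl

/-! ### The cut-off functions -/

def qcut (T : ℝ) (q' : ℝ → ℂ) : ℝ → ℂ := (Ioc 0 T).indicator q'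

def gfun (T : ℝ) (q' : ℝ → ℂ) (t : ℝ) : ℝ → ℂ :=
  fun u => qcut T q' (t - u) * Complex.exp (-(Complex.I * u) / 4)

lemma qcut_sm {T : ℝ} {q' : ℝ → ℂ} (hsm : StronglyMeasurable q') :
    StronglyMeasurable (qcut T q') := hsm.indicator measurableSet_Ioc

lemma qcut_mem {T : ℝ} {q' : ℝ → ℂ} (hsm : StronglyMeasurable q')
    (hmem : MemLp q' 2 (volume.restrict (Ioc 0 T))) :
    MemLp (qcut T q') 2 (volume : Measure ℝ) :=
  ⟨(qcut_sm hsm).aestronglyMeasurable, by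
    rw [qcut, eLpNorm_indicator_eq_eLpNorm_restrict measurableSet_Ioc]; exact hmem.2⟩

lemma shift_mem {T : ℝ} (L : ℝ) {q' : ℝ → ℂ} (hsm : StronglyMeasurable q')
    (hmem : MemLp q' 2 (volume.restrict (Ioc 0 T))) (t : ℝ) (e : ℝ → ℂ)
    (he : Continuous e) (hnorm : ∀ u, ‖e u‖ = 1) :
    MemLp (fun u => qcut T q' (t - u) * e u) 2 (volume.restrict (Ioc (0:ℝ) L)) := by
  have h1 : MemLp (fun u : ℝ => qcut T q' (t - u)) 2 (volume : Measure ℝ) :=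
    (qcut_mem hsm hmem).comp_measurePreserving (Measure.measurePreserving_sub_left volume t)
  refine (h1.restrict (Ioc (0:ℝ) L)).of_le ?_ (ae_of_all _ fun u => ?_)
  · exact (((qcut_sm hsm).comp_measurable (measurable_const.sub measurable_id)).mul
      he.stronglyMeasurable).aestronglyMeasurable
  · rw [norm_mul, hnorm, mul_one]

lemma exp_quarter_cont : Continuous fun u : ℝ => Complex.exp (-(Complex.I * u) / 4) := by fun_prop

lemma exp_quarter_norm (u : ℝ) : ‖Complex.exp (-(Complex.I * u) / 4)‖ = 1 := by
  rw [show -(Complex.I * (u:ℂ)) / 4 = Complex.I * ((-u / 4 : ℝ) : ℂ) by push_cast; ring]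
  exact norm_exp_I_mul_real _

lemma gfun_mem (T L : ℝ) {q' : ℝ → ℂ} (hsm : StronglyMeasurable q')
    (hmem : MemLp q' 2 (volume.restrict (Ioc 0 T))) (t : ℝ) :
    MemLp (gfun T q' t) 2 (volume.restrict (Ioc (0:ℝ) L)) :=
  shift_mem L hsm hmem t _ exp_quarter_cont exp_quarter_norm

def GLp (T L : ℝ) {q' : ℝ → ℂ} (hsm : StronglyMeasurable q')
    (hmem : MemLp q' 2 (volume.restrict (Ioc 0 T))) (t : ℝ) :
    Lp ℂ 2 (volume.restrict (Ioc (0:ℝ) L)) :=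
  MemLp.toLp (gfun T q' t) (gfun_mem T L hsm hmem t)

lemma GLp_cont (T L : ℝ) {q' : ℝ → ℂ} (hsm : StronglyMeasurable q')
    (hmem : MemLp q' 2 (volume.restrict (Ioc 0 T))) :
    Continuous (GLp T L hsm hmem) := by
  set R : Lp ℂ 2 (volume : Measure ℝ) := MemLp.toLp (qcut T q') (qcut_mem hsm hmem) with hRdef
  set cm : ℝ → C(ℝ, ℝ) := fun t => ⟨fun u => t - u, by fun_prop⟩ with hcmdef
  have hmp : ∀ t : ℝ, MeasurePreserving (cm t) volume volume := fun t =>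
    Measure.measurePreserving_sub_left volume t
  set Q : ℝ → Lp ℂ 2 (volume : Measure ℝ) :=
    fun t => Lp.compMeasurePreserving (cm t) (hmp t) R with hQdef
  have hcmc : Continuous cm := by
    rw [hcmdef]
    apply ContinuousMap.continuous_of_continuous_uncurry
    simp only [ContinuousMap.coe_mk]
    exact continuous_fst.sub continuous_snd
  have hQc : Continuous Q := by
    have h := MeasureTheory.Lp.compMeasurePreserving_continuous (volume : Measure ℝ)
      (volume : Measure ℝ) ℂ (p := 2) (by norm_num)
    exact h.comp (continuous_const.prodMk (hcmc.subtype_mk hmp))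
  rw [continuous_iff_continuousAt]
  intro t₀
  have hle : ∀ t : ℝ, dist (GLp T L hsm hmem t) (GLp T L hsm hmem t₀) ≤ dist (Q t) (Q t₀) := by
    intro t
    rw [dist_eq_norm, dist_eq_norm]
    simp only [GLp]
    rw [← MemLp.toLp_sub, Lp.norm_toLp, Lp.norm_def]
    refine ENNReal.toReal_mono (Lp.eLpNorm_ne_top _) ?_
    calc eLpNorm (gfun T q' t - gfun T q' t₀) 2 (volume.restrict (Ioc (0:ℝ) L))
        ≤ eLpNorm (fun u => qcut T q' (t - u) - qcut T q' (t₀ - u)) 2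
            (volume.restrict (Ioc (0:ℝ) L)) := by
          apply eLpNorm_mono
          intro u
          have hptw : (gfun T q' t - gfun T q' t₀) u
              = (qcut T q' (t - u) - qcut T q' (t₀ - u)) * Complex.exp (-(Complex.I * u) / 4) := by
            simp only [Pi.sub_apply, gfun]
            ring
          rw [hptw, norm_mul, exp_quarter_norm, mul_one]
      _ ≤ eLpNorm (fun u => qcut T q' (t - u) - qcut T q' (t₀ - u)) 2 (volume : Measure ℝ) :=
          eLpNorm_mono_measure _ Measure.restrict_le_self
      _ = eLpNorm (⇑(Q t - Q t₀)) 2 (volume : Measure ℝ) := by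
          refine (eLpNorm_congr_ae ?_).symm
          have e1 : ⇑(Q t) =ᵐ[volume] fun u => qcut T q' (t - u) := by
            have h1 := Lp.coeFn_compMeasurePreserving R (hmp t)
            have h2 : (⇑R ∘ ⇑(cm t)) =ᵐ[(volume : Measure ℝ)] (qcut T q' ∘ ⇑(cm t)) :=
              (hmp t).quasiMeasurePreserving.ae_eq_comp (MemLp.coeFn_toLp _)
            exact h1.trans h2
          have e0 : ⇑(Q t₀) =ᵐ[volume] fun u => qcut T q' (t₀ - u) := by
            have h1 := Lp.coeFn_compMeasurePreserving R (hmp t₀)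
            have h2 : (⇑R ∘ ⇑(cm t₀)) =ᵐ[(volume : Measure ℝ)] (qcut T q' ∘ ⇑(cm t₀)) :=
              (hmp t₀).quasiMeasurePreserving.ae_eq_comp (MemLp.coeFn_toLp _)
            exact h1.trans h2
          filter_upwards [Lp.coeFn_sub (Q t) (Q t₀), e1, e0] with u h h1 h0
          rw [h, Pi.sub_apply, h1, h0]
  have hQtend : Tendsto (fun t => dist (Q t) (Q t₀)) (𝓝 t₀) (𝓝 0) := by
    have h := (hQc.tendsto t₀).dist (tendsto_const_nhds (x := Q t₀))
    simpa using h
  exact tendsto_iff_dist_tendsto_zero.mpr (squeeze_zero (fun t => dist_nonneg) hle hQtend)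

lemma key_integral (T L : ℝ) (hTL : T ≤ L) (hL : 0 < L)
    (q q' : ℝ → ℂ) (hsm : StronglyMeasurable q')
    (hqq' : q =ᵐ[volume.restrict (Ioc 0 T)] q')
    (hmem : MemLp q' 2 (volume.restrict (Ioc 0 T)))
    {t : ℝ} (ht : t ∈ Icc (0:ℝ) T) {k : ℕ} (hk : Odd k) :
    (∫ s in (0:ℝ)..t, q s * Complex.exp (-Complex.I * (lam k : ℂ) * ((t:ℂ) - (s:ℂ))))
      = ∫ u in Ioc (0:ℝ) L, Complex.exp (-(Complex.I * (nkk k) * u)) * gfun T q' t u := by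
  have ht0 := ht.1
  have htT := ht.2
  have htL : t ≤ L := le_trans htT hTL
  have hlamc : (lam k : ℂ) = (nkk k : ℂ) + 1 / 4 := by
    rw [lam_odd hk]; push_cast; ring
  have step1 : (∫ s in (0:ℝ)..t, q s * Complex.exp (-Complex.I * (lam k : ℂ) * ((t:ℂ) - (s:ℂ))))
      = ∫ s in (0:ℝ)..t, q' s * Complex.exp (-Complex.I * (lam k : ℂ) * ((t:ℂ) - (s:ℂ))) := by
    apply intervalIntegral.integral_congr_ae
    have haeT : ∀ᵐ x : ℝ ∂volume, x ∈ Ioc (0:ℝ) T → q x = q' x :=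
      (ae_restrict_iff' measurableSet_Ioc).mp hqq'
    filter_upwards [haeT] with x hx hxI
    rw [Set.uIoc_of_le ht0] at hxI
    rw [hx ⟨hxI.1, le_trans hxI.2 htT⟩]
  have step2 : (∫ s in (0:ℝ)..t, q' s * Complex.exp (-Complex.I * (lam k : ℂ) * ((t:ℂ) - (s:ℂ))))
      = ∫ u in (0:ℝ)..t, q' (t - u) * Complex.exp (-Complex.I * (lam k : ℂ) * ((u:ℝ):ℂ)) := by
    have h := intervalIntegral.integral_comp_sub_left (a := (0:ℝ)) (b := t)
      (fun u : ℝ => q' (t - u) * Complex.exp (-Complex.I * (lam k : ℂ) * ((u:ℝ):ℂ))) t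
    simp only [sub_self, sub_zero] at h
    rw [← h]
    apply intervalIntegral.integral_congr
    intro x hx
    show q' x * Complex.exp (-Complex.I * (lam k : ℂ) * ((t:ℂ) - (x:ℂ)))
        = q' (t - (t - x)) * Complex.exp (-Complex.I * (lam k : ℂ) * ((t - x : ℝ):ℂ))
    rw [show t - (t - x) = x by ring]
    norm_cast
  have step3 : (∫ u in (0:ℝ)..t, q' (t - u) * Complex.exp (-Complex.I * (lam k : ℂ) * ((u:ℝ):ℂ)))
      = ∫ u in (0:ℝ)..t, qcut T q' (t - u) * Complex.exp (-Complex.I * (lam k : ℂ) * ((u:ℝ):ℂ)) := by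
    apply intervalIntegral.integral_congr_ae
    have hne : ∀ᵐ x : ℝ ∂volume, x ≠ t := by
      rw [ae_iff]
      simp only [not_not, setOf_eq_eq_singleton]
      exact measure_singleton t
    filter_upwards [hne] with x hx hxI
    rw [Set.uIoc_of_le ht0] at hxI
    have hxlt : x < t := lt_of_le_of_ne hxI.2 hx
    have hmem' : t - x ∈ Ioc (0:ℝ) T := ⟨by linarith, by linarith [hxI.1]⟩
    rw [qcut, indicator_of_mem hmem']
  have hintg : MemLp (fun u => qcut T q' (t - u) *
      Complex.exp (-Complex.I * (lam k : ℂ) * ((u:ℝ):ℂ))) 2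
      (volume.restrict (Ioc (0:ℝ) L)) := by
    refine shift_mem L hsm hmem t _ (by fun_prop) fun u => ?_
    rw [show -Complex.I * (lam k : ℂ) * ((u:ℝ):ℂ)
        = Complex.I * ((-(lam k) * u : ℝ):ℂ) by push_cast; ring]
    exact norm_exp_I_mul_real _
  have hIoc : IntegrableOn (fun u => qcut T q' (t - u) *
      Complex.exp (-Complex.I * (lam k : ℂ) * ((u:ℝ):ℂ))) (Ioc (0:ℝ) L) volume :=
    memLp_one_iff_integrable.mp (hintg.mono_exponent (by norm_num))
  have hII : IntervalIntegrable (fun u => qcut T q' (t - u) *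
      Complex.exp (-Complex.I * (lam k : ℂ) * ((u:ℝ):ℂ))) volume 0 L :=
    (intervalIntegrable_iff_integrableOn_Ioc_of_le hL.le).mpr hIoc
  have hII1 : IntervalIntegrable (fun u => qcut T q' (t - u) *
      Complex.exp (-Complex.I * (lam k : ℂ) * ((u:ℝ):ℂ))) volume 0 t :=
    hII.mono_set (by rw [uIcc_of_le ht0, uIcc_of_le hL.le]; exact Icc_subset_Icc le_rfl htL)
  have hII2 : IntervalIntegrable (fun u => qcut T q' (t - u) *
      Complex.exp (-Complex.I * (lam k : ℂ) * ((u:ℝ):ℂ))) volume t L :=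
    hII.mono_set (by rw [uIcc_of_le htL, uIcc_of_le hL.le]; exact Icc_subset_Icc ht0 le_rfl)
  have hzero : (∫ u in t..L, qcut T q' (t - u) *
      Complex.exp (-Complex.I * (lam k : ℂ) * ((u:ℝ):ℂ))) = 0 := by
    rw [intervalIntegral.integral_congr (g := fun _ => (0:ℂ)) ?_, intervalIntegral.integral_zero]
    intro u hu
    rw [uIcc_of_le htL] at hu
    have hnm : t - u ∉ Ioc (0:ℝ) T := by
      intro hmem'
      have h1 := hmem'.1
      have h2 := hu.1
      linarith
    simp [qcut, indicator_of_notMem hnm]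
  have hsplit := intervalIntegral.integral_add_adjacent_intervals hII1 hII2
  rw [step1, step2, step3]
  rw [show (∫ u in (0:ℝ)..t, qcut T q' (t - u) *
        Complex.exp (-Complex.I * (lam k : ℂ) * ((u:ℝ):ℂ)))
      = ∫ u in (0:ℝ)..L, qcut T q' (t - u) *
        Complex.exp (-Complex.I * (lam k : ℂ) * ((u:ℝ):ℂ)) by
    rw [← hsplit, hzero, add_zero]]
  rw [intervalIntegral.integral_of_le hL.le]
  refine integral_congr_ae (ae_of_all _ fun u => ?_)
  simp only [gfun]
  rw [mul_left_comm, ← Complex.exp_add]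
  congr 2
  rw [hlamc]
  ring

set_option maxHeartbeats 1000000 in
/-- Let `T > 0` and `q ∈ L²((0,T),ℂ)`. With
`c_k(t) = ∫₀ᵗ q(s) e^{−iλ_k(t−s)} ds` for `k ∈ D`, the family `(c_k(t))_{k∈D}` is
square-summable for each `t ∈ [0,T]`, and `t ↦ (c_k(t))_{k∈D}` is continuous from `[0,T]`
into `ℓ²(D)`. -/
theorem stmt17 (T : ℝ) (hT : 0 < T) (q : ℝ → ℂ)
    (hq : MemLp q 2 (volume.restrict (Ioc 0 T))) :
    (∀ t ∈ Icc (0:ℝ) T, Memℓp (fun k : {k : ℕ // Odd k} =>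
      ∫ s in (0:ℝ)..t, q s * Complex.exp (-Complex.I * (lam k.1 : ℂ) * ((t:ℂ) - (s:ℂ)))) 2) ∧
    ∃ φ : ℝ → lp (fun _ : {k : ℕ // Odd k} => ℂ) 2,
      (∀ t ∈ Icc (0:ℝ) T, ∀ k : {k : ℕ // Odd k},
        (φ t : ∀ _ : {k : ℕ // Odd k}, ℂ) k =
          ∫ s in (0:ℝ)..t, q s * Complex.exp (-Complex.I * (lam k.1 : ℂ) * ((t:ℂ) - (s:ℂ)))) ∧
      ContinuousOn φ (Icc (0:ℝ) T) := by
  classical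
  obtain ⟨q', hq'sm, hqq'⟩ := hq.1
  have hq'mem : MemLp q' 2 (volume.restrict (Ioc 0 T)) :=
    ⟨hq'sm.aestronglyMeasurable, by rw [← eLpNorm_congr_ae hqq']; exact hq.2⟩
  set M : ℕ := ⌈T / (2 * π)⌉₊ + 1 with hMdef
  set L : ℝ := 2 * π * (M : ℝ) with hLdef
  have hL : (0:ℝ) < L := by rw [hLdef]; positivity
  have hTL : T ≤ L := by
    have h2π : (0:ℝ) < 2 * π := by positivity
    have h1 : T / (2 * π) ≤ (⌈T / (2 * π)⌉₊ : ℝ) := Nat.le_ceil _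
    have h2 : ((⌈T / (2 * π)⌉₊ : ℕ) : ℝ) ≤ (M : ℝ) := by
      rw [hMdef]; push_cast; linarith
    calc T = T / (2 * π) * (2 * π) := by field_simp
      _ ≤ (M : ℝ) * (2 * π) := mul_le_mul_of_nonneg_right (le_trans h1 h2) h2π.le
      _ = L := by rw [hLdef]; ring
  have hON : Orthonormal ℂ (fun n : ℕ => vLp L n) := by
    rw [hLdef]
    exact orthonormal_vLp M (by omega)
  set w : {k : ℕ // Odd k} → Lp ℂ 2 (volume.restrict (Ioc (0:ℝ) L)) :=
    fun k => vLp L (nkk k.1) with hwdef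
  have hwON : Orthonormal ℂ w := by
    have h := hON.comp _ nkk_inj
    exact h
  have keyinner : ∀ t ∈ Icc (0:ℝ) T, ∀ k : {k : ℕ // Odd k},
      (∫ s in (0:ℝ)..t, q s * Complex.exp (-Complex.I * (lam k.1 : ℂ) * ((t:ℂ) - (s:ℂ))))
        = ((Real.sqrt L : ℝ) : ℂ) * (inner ℂ (w k) (GLp T L hq'sm hq'mem t) : ℂ) := by
    intro t ht k
    simp only [hwdef]
    rw [show GLp T L hq'sm hq'mem t
        = MemLp.toLp (gfun T q' t) (gfun_mem T L hq'sm hq'mem t) from rfl]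
    rw [inner_vLp L (nkk k.1) (gfun T q' t) (gfun_mem T L hq'sm hq'mem t)]
    rw [← mul_assoc, show ((Real.sqrt L : ℝ) : ℂ) * (((Real.sqrt L)⁻¹ : ℝ) : ℂ) = 1 by
      rw [← Complex.ofReal_mul, mul_inv_cancel₀ (ne_of_gt (Real.sqrt_pos.mpr hL))]
      norm_num, one_mul]
    exact key_integral T L hTL hL q q' hq'sm hqq' hq'mem ht k.2
  refine ⟨?_, ⟨fun t => ((Real.sqrt L : ℝ) : ℂ) • (besselCLM w hwON (GLp T L hq'sm hq'mem t)),
    ?_, ?_⟩⟩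
  · intro t ht
    have hfe : (fun k : {k : ℕ // Odd k} =>
        ∫ s in (0:ℝ)..t, q s * Complex.exp (-Complex.I * (lam k.1 : ℂ) * ((t:ℂ) - (s:ℂ))))
        = fun k => ((Real.sqrt L : ℝ) : ℂ) * (inner ℂ (w k) (GLp T L hq'sm hq'mem t) : ℂ) :=
      funext fun k => keyinner t ht k
    rw [hfe]
    exact (memℓp_inner hwON (GLp T L hq'sm hq'mem t)).const_smul (((Real.sqrt L : ℝ)) : ℂ)
  · intro t ht k
    simp only
    rw [lp.coeFn_smul, Pi.smul_apply, besselCLM_apply, smul_eq_mul]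
    exact (keyinner t ht k).symm
  · exact (Continuous.const_smul
      ((besselCLM w hwON).continuous.comp (GLp_cont T L hq'sm hq'mem)) (((Real.sqrt L : ℝ)) : ℂ)).continuousOn
end
end
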